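/- arXiv:2112.04097 — 3 statements merged into one kernel-verified Lean document; each statement's English description precedes it below -/
import Mathlib

section
/- If D is a strongly connected finite digraph with exactly three complementarity eigenvalues that contains an ∞(r,s)-subdigraph, then D has exactly r + s − 1 vertices. -/
open Matrix
open scoped Classical

noncomputable section

/-- Adjacency matrix of a digraph given by an arc relation `E`. -/
def adjMat {V : Type*} (E : V → V → Prop) : Matrix V V ℝ :=
  Matrix.of fun i j => if E i j then (1 : ℝ) else 0

/-- Spectral radius of a real square matrix: the largest modulus of a (complex) eigenvalue. -/
def matSpecRad {n : Type*} [Fintype n] (A : Matrix n n ℝ) : ℝ :=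
  sSup {r : ℝ | ∃ μ ∈ spectrum ℂ (A.map (fun x => (x : ℂ))), r = ‖μ‖}

/-- Spectral radius of a digraph. -/
def rho {V : Type*} [Fintype V] (E : V → V → Prop) : ℝ :=
  matSpecRad (adjMat E)

/-- The complementarity spectrum of a real square matrix. -/
def compSpec {n : Type*} [Fintype n] (A : Matrix n n ℝ) : Set ℝ :=
  {lam | ∃ x : n → ℝ, x ≠ 0 ∧ 0 ≤ x ∧ 0 ≤ A.mulVec x - lam • x ∧
    x ⬝ᵥ (A.mulVec x - lam • x) = 0}

/-- Reachability by directed paths. -/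
def Reach {V : Type*} (E : V → V → Prop) : V → V → Prop :=
  Relation.ReflTransGen E

/-- A digraph is strongly connected if every vertex reaches every other one. -/
def StronglyConnected {V : Type*} (E : V → V → Prop) : Prop :=
  ∀ u v, Reach E u v

/-- Induced subdigraph on a vertex subset `S`. -/
def induceRel {V : Type*} (E : V → V → Prop) (S : Set V) : S → S → Prop :=
  fun a b => E a.1 b.1

/-- Spectral radius of the induced subdigraph on `S`. -/
def specRadOn {V : Type*} [Fintype V] (E : V → V → Prop) (S : Set V) : ℝ :=
  @rho S (Set.Finite.fintype S.toFinite) (induceRel E S)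

/-- Complementarity spectrum of the induced subdigraph on `S`. -/
def compSpecOn {V : Type*} [Fintype V] (E : V → V → Prop) (S : Set V) : Set ℝ :=
  @compSpec S (Set.Finite.fintype S.toFinite) (adjMat (induceRel E S))

/-- Isomorphism of digraphs. -/
def IsoDigraph {V W : Type*} (E : V → V → Prop) (F : W → W → Prop) : Prop :=
  ∃ e : V ≃ W, ∀ a b, E a b ↔ F (e a) (e b)

/-- The directed cycle on `n` vertices. -/
def cycleRel (n : ℕ) : ZMod n → ZMod n → Prop := fun i j => j = i + 1

/-- A digraph is a directed cycle if it is isomorphic to some `C⃗_n`, `n ≥ 2`. -/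
def IsCycleDigraph {V : Type*} (E : V → V → Prop) : Prop :=
  ∃ n : ℕ, 2 ≤ n ∧ IsoDigraph E (cycleRel n)

/-- A digraph is acyclic if it has no directed cycle. -/
def Acyclic {V : Type*} (E : V → V → Prop) : Prop :=
  ∀ v, ¬ Relation.TransGen E v v

/-- Strongly connected component of the vertex `v`. -/
def component {V : Type*} (E : V → V → Prop) (v : V) : Set V :=
  {u | Reach E u v ∧ Reach E v u}

/-- `D` has an `∞(r,s)`-subdigraph: two directed cycles of lengths `r` and `s`
sharing exactly one vertex, all of whose arcs are arcs of `D`. -/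
def InftySub {V : Type*} (E : V → V → Prop) (r s : ℕ) : Prop :=
  ∃ (f : ZMod r → V) (g : ZMod s → V),
    Function.Injective f ∧ Function.Injective g ∧ f 0 = g 0 ∧
    Set.range f ∩ Set.range g = {f 0} ∧
    (∀ i, E (f i) (f (i + 1))) ∧ (∀ j, E (g j) (g (j + 1)))

/-- `D` has a `θ(a,b,c)`-subdigraph: three internally disjoint directed paths,
two from `v` to `w` (of lengths `a+1` and `b+1`) and one from `w` to `v`
(of length `c+1`), all of whose arcs are arcs of `D`. -/
def ThetaSub {V : Type*} (E : V → V → Prop) (a b c : ℕ) : Prop :=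
  ∃ (P : Fin (a + 2) → V) (Q : Fin (b + 2) → V) (R : Fin (c + 2) → V),
    Function.Injective P ∧ Function.Injective Q ∧ Function.Injective R ∧
    P 0 = Q 0 ∧ Q 0 = R (Fin.last (c + 1)) ∧
    P (Fin.last (a + 1)) = Q (Fin.last (b + 1)) ∧ Q (Fin.last (b + 1)) = R 0 ∧
    (∀ i j, P i = Q j → (i = 0 ∧ j = 0) ∨ (i = Fin.last (a + 1) ∧ j = Fin.last (b + 1))) ∧
    (∀ i j, P i = R j → (i = 0 ∧ j = Fin.last (c + 1)) ∨ (i = Fin.last (a + 1) ∧ j = 0)) ∧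
    (∀ i j, Q i = R j → (i = 0 ∧ j = Fin.last (c + 1)) ∨ (i = Fin.last (b + 1) ∧ j = 0)) ∧
    (∀ i : Fin (a + 1), E (P i.castSucc) (P i.succ)) ∧
    (∀ i : Fin (b + 1), E (Q i.castSucc) (Q i.succ)) ∧
    (∀ i : Fin (c + 1), E (R i.castSucc) (R i.succ))

/-- `D` is (isomorphic to) the `∞(r,s)` digraph: the coalescence of the directed
cycles `C⃗_r` and `C⃗_s` at one vertex, with no further vertices or arcs. -/
def IsInftyDigraph {V : Type*} (E : V → V → Prop) (r s : ℕ) : Prop :=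
  ∃ (f : ZMod r → V) (g : ZMod s → V),
    Function.Injective f ∧ Function.Injective g ∧ f 0 = g 0 ∧
    Set.range f ∩ Set.range g = {f 0} ∧
    Set.range f ∪ Set.range g = Set.univ ∧
    ∀ u v, E u v ↔ ((∃ i, u = f i ∧ v = f (i + 1)) ∨ (∃ j, u = g j ∧ v = g (j + 1)))

/-- `D` is (isomorphic to) the `θ(a,b,c)` digraph: three internally disjoint
directed paths, two from `v` to `w` and one from `w` to `v`, with no further
vertices or arcs. -/
def IsThetaDigraph {V : Type*} (E : V → V → Prop) (a b c : ℕ) : Prop :=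
  ∃ (P : Fin (a + 2) → V) (Q : Fin (b + 2) → V) (R : Fin (c + 2) → V),
    Function.Injective P ∧ Function.Injective Q ∧ Function.Injective R ∧
    P 0 = Q 0 ∧ Q 0 = R (Fin.last (c + 1)) ∧
    P (Fin.last (a + 1)) = Q (Fin.last (b + 1)) ∧ Q (Fin.last (b + 1)) = R 0 ∧
    (∀ i j, P i = Q j → (i = 0 ∧ j = 0) ∨ (i = Fin.last (a + 1) ∧ j = Fin.last (b + 1))) ∧
    (∀ i j, P i = R j → (i = 0 ∧ j = Fin.last (c + 1)) ∨ (i = Fin.last (a + 1) ∧ j = 0)) ∧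
    (∀ i j, Q i = R j → (i = 0 ∧ j = Fin.last (c + 1)) ∨ (i = Fin.last (b + 1) ∧ j = 0)) ∧
    Set.range P ∪ Set.range Q ∪ Set.range R = Set.univ ∧
    (∀ u v, E u v ↔
      ((∃ i : Fin (a + 1), u = P i.castSucc ∧ v = P i.succ) ∨
       (∃ i : Fin (b + 1), u = Q i.castSucc ∧ v = Q i.succ) ∨
       (∃ i : Fin (c + 1), u = R i.castSucc ∧ v = R i.succ)))

namespace Stmt17


variable {n : Type*} [Fintype n]

lemma entry_nonneg_mul {A B : Matrix n n ℝ} (hA : ∀ i j, 0 ≤ A i j) (hB : ∀ i j, 0 ≤ B i j) :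
    ∀ i j, 0 ≤ (A * B) i j := by
  intro i j
  rw [Matrix.mul_apply]
  exact Finset.sum_nonneg fun k _ => mul_nonneg (hA i k) (hB k j)

lemma entry_nonneg_pow {A : Matrix n n ℝ} (hA : ∀ i j, 0 ≤ A i j) :
    ∀ (m : ℕ) (i j : n), 0 ≤ (A ^ m) i j := by
  intro m
  induction m with
  | zero =>
      intro i j
      simp only [pow_zero, Matrix.one_apply]
      split <;> norm_num
  | succ m ih =>
      rw [pow_succ]
      exact entry_nonneg_mul ih hA

lemma one_add_nonneg {A : Matrix n n ℝ} (hA : ∀ i j, 0 ≤ A i j) :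
    ∀ i j, 0 ≤ (1 + A) i j := by
  intro i j
  have h : (1 + A) i j = (1 : Matrix n n ℝ) i j + A i j := rfl
  rw [h, Matrix.one_apply]
  split <;> nlinarith [hA i j]

lemma diag_pow_one_le {A : Matrix n n ℝ} (hA : ∀ i j, 0 ≤ A i j) :
    ∀ (m : ℕ) (j : n), 1 ≤ ((1 + A) ^ m : Matrix n n ℝ) j j := by
  intro m
  induction m with
  | zero => intro j; simp [Matrix.one_apply]
  | succ m ih =>
      intro j
      rw [pow_succ, Matrix.mul_apply]
      have h1 : (((1 + A) ^ m : Matrix n n ℝ)) j j * (1 + A) j j ≤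
          ∑ u, (((1 + A) ^ m : Matrix n n ℝ)) j u * (1 + A) u j :=
        Finset.single_le_sum
          (fun u _ => mul_nonneg (entry_nonneg_pow (one_add_nonneg hA) m j u)
            (one_add_nonneg hA u j)) (Finset.mem_univ j)
      have h2 : (1 : ℝ) ≤ (1 + A) j j := by
        have h : (1 + A) j j = (1 : Matrix n n ℝ) j j + A j j := rfl
        rw [h, Matrix.one_apply_eq]
        nlinarith [hA j j]
      nlinarith [ih j, entry_nonneg_pow (one_add_nonneg hA) m j j]

lemma pow_pos_mono {A : Matrix n n ℝ} (hA : ∀ i j, 0 ≤ A i j) {m M : ℕ} {i j : n}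
    (hm : m ≤ M) (h : 0 < ((1 + A) ^ m : Matrix n n ℝ) i j) :
    0 < ((1 + A) ^ M : Matrix n n ℝ) i j := by
  have hMm : M = m + (M - m) := by omega
  rw [hMm, pow_add, Matrix.mul_apply]
  have h1 : ((1 + A) ^ m : Matrix n n ℝ) i j * ((1 + A) ^ (M - m) : Matrix n n ℝ) j j ≤
      ∑ u, ((1 + A) ^ m : Matrix n n ℝ) i u * ((1 + A) ^ (M - m) : Matrix n n ℝ) u j :=
    Finset.single_le_sum
      (fun u _ => mul_nonneg (entry_nonneg_pow (one_add_nonneg hA) m i u)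
        (entry_nonneg_pow (one_add_nonneg hA) (M - m) u j)) (Finset.mem_univ j)
  nlinarith [diag_pow_one_le hA (M - m) j]

lemma exists_pow_pos {A : Matrix n n ℝ} (hA : ∀ i j, 0 ≤ A i j) {i j : n}
    (hR : Relation.ReflTransGen (fun a b => 0 < A a b) i j) :
    ∃ m, 0 < ((1 + A) ^ m : Matrix n n ℝ) i j := by
  induction hR using Relation.ReflTransGen.head_induction_on with
  | refl => exact ⟨0, by simp⟩
  | head h _ ih =>
      rename_i a c _
      obtain ⟨m, hm⟩ := ih
      refine ⟨m + 1, ?_⟩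
      rw [pow_succ', Matrix.mul_apply]
      have hle : (1 + A) a c * ((1 + A) ^ m : Matrix n n ℝ) c j ≤
          ∑ u, (1 + A) a u * ((1 + A) ^ m : Matrix n n ℝ) u j :=
        Finset.single_le_sum
          (fun u _ => mul_nonneg (one_add_nonneg hA a u)
            (entry_nonneg_pow (one_add_nonneg hA) m u j)) (Finset.mem_univ c)
      have hac : 0 < (1 + A) a c := by
        have he : (1 + A) a c = (1 : Matrix n n ℝ) a c + A a c := rfl
        rw [he, Matrix.one_apply]
        split <;> nlinarith
      nlinarith

lemma exists_B [Nonempty n] {A : Matrix n n ℝ} (hA : ∀ i j, 0 ≤ A i j)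
    (hconn : ∀ i j, Relation.ReflTransGen (fun a b => 0 < A a b) i j) :
    ∃ B : Matrix n n ℝ, (∀ i j, 0 < B i j) ∧ Commute A B := by
  have h : ∀ p : n × n, ∃ m, 0 < ((1 + A) ^ m : Matrix n n ℝ) p.1 p.2 :=
    fun p => exists_pow_pos hA (hconn p.1 p.2)
  choose m hm using h
  refine ⟨(1 + A) ^ (Finset.univ.sup m), fun i j => ?_, ?_⟩
  · exact pow_pos_mono hA (Finset.le_sup (Finset.mem_univ (i, j))) (hm (i, j))
  · exact (((Commute.one_right A).add_right (Commute.refl A)).pow_right _)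

lemma mulVec_pos {B : Matrix n n ℝ} (hB : ∀ i j, 0 < B i j) {x : n → ℝ}
    (hx : ∀ i, 0 ≤ x i) {j0 : n} (hj0 : 0 < x j0) : ∀ i, 0 < B.mulVec x i := by
  intro i
  have h1 : B i j0 * x j0 ≤ ∑ j, B i j * x j :=
    Finset.single_le_sum (fun j _ => mul_nonneg (hB i j).le (hx j)) (Finset.mem_univ j0)
  have h0 : 0 < B i j0 * x j0 := mul_pos (hB i j0) hj0
  simpa [Matrix.mulVec, dotProduct] using lt_of_lt_of_le h0 h1

lemma continuous_mulVec_apply (M : Matrix n n ℝ) (i : n) :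
    Continuous fun x : n → ℝ => M.mulVec x i := by
  simp only [Matrix.mulVec, dotProduct]
  exact continuous_finset_sum _ fun j _ => continuous_const.mul (continuous_apply j)

lemma comm_shift {A B : Matrix n n ℝ} (hcomm : Commute A B) (ρ : ℝ) (v : n → ℝ) :
    B.mulVec (fun i => A.mulVec v i - ρ * v i)
      = fun i => A.mulVec (B.mulVec v) i - ρ * B.mulVec v i := by
  have h1 : (fun i => A.mulVec v i - ρ * v i) = A.mulVec v - ρ • v := by
    funext i; simp
  rw [h1, Matrix.mulVec_sub, Matrix.mulVec_smul, Matrix.mulVec_mulVec, ← hcomm.eq,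
    ← Matrix.mulVec_mulVec]
  funext i; simp

theorem perron_exists [Nonempty n] (A : Matrix n n ℝ) (hA : ∀ i j, 0 ≤ A i j)
    (hconn : ∀ i j, Relation.ReflTransGen (fun a b => 0 < A a b) i j) :
    ∃ (ρ : ℝ) (y : n → ℝ), 0 ≤ ρ ∧ (∀ i, 0 < y i) ∧ A.mulVec y = ρ • y := by
  classical
  obtain ⟨B, hBpos, hcomm⟩ := exists_B hA hconn
  set Δ : Set (n → ℝ) := {x | (∀ i, 0 ≤ x i) ∧ ∑ i, x i = 1} with hΔ
  have hcard : (0 : ℝ) < (Fintype.card n : ℝ) := by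
    have := Fintype.card_pos (α := n); positivity
  have hΔne : Δ.Nonempty := by
    refine ⟨fun _ => (Fintype.card n : ℝ)⁻¹, fun i => by positivity, ?_⟩
    simp [Finset.sum_const, Finset.card_univ]
  have hΔclosed : IsClosed Δ := by
    have h1 : IsClosed {x : n → ℝ | ∀ i, 0 ≤ x i} := by
      have he : {x : n → ℝ | ∀ i, 0 ≤ x i} = ⋂ i, {x | 0 ≤ x i} := by ext; simp
      rw [he]
      exact isClosed_iInter fun i => isClosed_le continuous_const (continuous_apply i)
    have h2 : IsClosed {x : n → ℝ | ∑ i, x i = 1} :=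
      isClosed_eq (continuous_finset_sum _ fun i _ => continuous_apply i) continuous_const
    exact h1.inter h2
  have hΔcompact : IsCompact Δ := by
    refine IsCompact.of_isClosed_subset (isCompact_univ_pi fun _ : n => isCompact_Icc
      (a := (0:ℝ)) (b := 1)) hΔclosed ?_
    intro x hx
    rw [Set.mem_univ_pi]
    intro i
    refine ⟨hx.1 i, ?_⟩
    calc x i ≤ ∑ j, x j := Finset.single_le_sum (fun j _ => hx.1 j) (Finset.mem_univ i)
    _ = 1 := hx.2
  have hBx : ∀ x ∈ Δ, ∀ i, 0 < B.mulVec x i := by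
    intro x hx i
    obtain ⟨j0, hj0⟩ : ∃ j0, 0 < x j0 := by
      by_contra hcon
      push_neg at hcon
      have h0 : ∑ j, x j = 0 := Finset.sum_eq_zero fun j _ => le_antisymm (hcon j) (hx.1 j)
      rw [hx.2] at h0; norm_num at h0
    exact mulVec_pos hBpos hx.1 hj0 i
  set F : n → (n → ℝ) → ℝ := fun i x => (A.mulVec (B.mulVec x)) i / (B.mulVec x) i with hF
  have hFcont : ∀ i, ContinuousOn (F i) Δ := by
    intro i
    exact ContinuousOn.div
      ((continuous_mulVec_apply A i).comp
        (continuous_pi fun j => continuous_mulVec_apply B j)).continuousOn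
      (continuous_mulVec_apply B i).continuousOn
      (fun x hx => (hBx x hx i).ne')
  set h : (n → ℝ) → ℝ := fun x => Finset.univ.inf' Finset.univ_nonempty (fun i => F i x) with hh
  have hhcont : ContinuousOn h Δ := by
    have hgen : ∀ (t : Finset n) (ht : t.Nonempty),
        ContinuousOn (fun x => t.inf' ht (fun i => F i x)) Δ := by
      intro t ht
      induction ht using Finset.Nonempty.cons_induction with
      | singleton a => simpa using hFcont a
      | cons a s ha hs ih =>
          simp only [Finset.inf'_cons hs]
          exact fun x hx => ((hFcont a) x hx).min (ih x hx)
    exact hgen _ _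
  obtain ⟨xs, hxsΔ, hmax⟩ := hΔcompact.exists_isMaxOn hΔne hhcont
  set ρ : ℝ := h xs with hρ
  set y : n → ℝ := B.mulVec xs with hy
  have hypos : ∀ i, 0 < y i := hBx xs hxsΔ
  have hge : ∀ i, ρ * y i ≤ A.mulVec y i := by
    intro i
    have h1 : ρ ≤ F i xs := Finset.inf'_le _ (Finset.mem_univ i)
    rw [hF] at h1
    have h2 := (le_div_iff₀ (hypos i)).mp h1
    simpa [hy] using h2
  have heq : A.mulVec y = ρ • y := by
    by_contra hne
    have hzne : ∃ i0, A.mulVec y i0 - ρ * y i0 ≠ 0 := by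
      by_contra hz
      push_neg at hz
      apply hne
      funext i
      have h3 := hz i
      simp only [Pi.smul_apply, smul_eq_mul]
      linarith
    obtain ⟨i0, hi0⟩ := hzne
    set z : n → ℝ := fun i => A.mulVec y i - ρ * y i with hz
    have hznn : ∀ i, 0 ≤ z i := by
      intro i
      have := hge i
      show (0:ℝ) ≤ A.mulVec y i - ρ * y i
      linarith
    have hzpos : 0 < z i0 := lt_of_le_of_ne (hznn i0) (Ne.symm hi0)
    have hw : ∀ i, 0 < B.mulVec z i := mulVec_pos hBpos hznn hzpos
    have hBz : ∀ i, 0 < A.mulVec (B.mulVec y) i - ρ * B.mulVec y i := by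
      intro i
      have h4 := hw i
      rw [hz, comm_shift hcomm] at h4
      exact h4
    set y' : n → ℝ := B.mulVec y with hy'
    have hy'pos : ∀ i, 0 < y' i :=
      mulVec_pos hBpos (fun i => (hypos i).le) (hypos (Classical.arbitrary n))
    have hstrict : ∀ i, 0 < A.mulVec y' i - ρ * y' i := hBz
    have hBstrict : ∀ i, 0 < A.mulVec (B.mulVec y') i - ρ * B.mulVec y' i := by
      intro i
      have h5 : 0 < B.mulVec (fun j => A.mulVec y' j - ρ * y' j) i :=
        mulVec_pos hBpos (fun j => (hstrict j).le) (hstrict (Classical.arbitrary n)) i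
      rw [comm_shift hcomm] at h5
      exact h5
    set c : ℝ := ∑ i, y' i with hc
    have hcpos : 0 < c :=
      lt_of_lt_of_le (hy'pos (Classical.arbitrary n))
        (Finset.single_le_sum (fun j _ => (hy'pos j).le) (Finset.mem_univ _))
    set x' : n → ℝ := c⁻¹ • y' with hx'
    have hx'Δ : x' ∈ Δ := by
      constructor
      · intro i
        simp only [hx', Pi.smul_apply, smul_eq_mul]
        exact mul_nonneg (by positivity) (hy'pos i).le
      · simp only [hx', Pi.smul_apply, smul_eq_mul, ← Finset.mul_sum]
        rw [← hc]
        field_simp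
    have hBy'pos : ∀ i, 0 < B.mulVec y' i :=
      mulVec_pos hBpos (fun i => (hy'pos i).le) (hy'pos (Classical.arbitrary n))
    have hkey : ρ < h x' := by
      rw [hh, Finset.lt_inf'_iff]
      intro i _
      simp only [hF]
      have hB1 : B.mulVec x' = c⁻¹ • B.mulVec y' := by rw [hx', Matrix.mulVec_smul]
      rw [hB1, Matrix.mulVec_smul]
      simp only [Pi.smul_apply, smul_eq_mul]
      have hcinv : (0 : ℝ) < c⁻¹ := by positivity
      rw [mul_div_mul_left _ _ (ne_of_gt hcinv)]
      rw [lt_div_iff₀ (hBy'pos i)]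
      linarith [hBstrict i]
    have h6 := hmax hx'Δ
    simp only [Set.mem_setOf_eq] at h6
    exact absurd (lt_of_lt_of_le hkey h6) (lt_irrefl ρ)
  refine ⟨ρ, y, ?_, hypos, heq⟩
  have h7 := congrFun heq (Classical.arbitrary n)
  simp only [Pi.smul_apply, smul_eq_mul] at h7
  have h0 : 0 ≤ A.mulVec y (Classical.arbitrary n) := by
    apply Finset.sum_nonneg
    intro j _
    exact mul_nonneg (hA _ j) (hypos j).le
  nlinarith [hypos (Classical.arbitrary n)]



variable {V : Type*} [Fintype V]

lemma adjMat_nonneg (E : V → V → Prop) : ∀ i j, 0 ≤ adjMat E i j := by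
  intro i j
  simp only [adjMat, Matrix.of_apply]
  split <;> norm_num

lemma adjMat_mulVec_nonneg (E : V → V → Prop) {x : V → ℝ} (hx : ∀ v, 0 ≤ x v) :
    ∀ v, 0 ≤ (adjMat E).mulVec x v := by
  intro v
  exact Finset.sum_nonneg fun u _ => mul_nonneg (adjMat_nonneg E v u) (hx u)

/-- An eigenvalue with a nonnegative eigenvector positive exactly on `S`. -/
def RightPair (E : V → V → Prop) (S : Set V) (ρ : ℝ) (x : V → ℝ) : Prop :=
  (∀ v, 0 ≤ x v) ∧ (∀ v, 0 < x v ↔ v ∈ S) ∧ 0 ≤ ρ ∧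
  (∀ v ∈ S, (adjMat E).mulVec x v = ρ * x v)

lemma RightPair.zero_of_not_mem {E : V → V → Prop} {S : Set V} {ρ : ℝ} {x : V → ℝ}
    (h : RightPair E S ρ x) {v : V} (hv : v ∉ S) : x v = 0 :=
  le_antisymm (le_of_not_gt (fun hlt => hv ((h.2.1 v).mp hlt))) (h.1 v)

lemma rightPair_mem {E : V → V → Prop} {S : Set V} {ρ : ℝ} {x : V → ℝ}
    (hne : S.Nonempty) (h : RightPair E S ρ x) : ρ ∈ compSpec (adjMat E) := by
  obtain ⟨s0, hs0⟩ := hne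
  refine ⟨x, ?_, ?_, ?_, ?_⟩
  · intro h0
    have hpos := (h.2.1 s0).mpr hs0
    rw [h0] at hpos
    exact lt_irrefl 0 hpos
  · intro v
    exact h.1 v
  · intro v
    simp only [Pi.zero_apply, Pi.sub_apply, Pi.smul_apply, smul_eq_mul]
    by_cases hv : v ∈ S
    · rw [h.2.2.2 v hv]; simp
    · rw [h.zero_of_not_mem hv, mul_zero, sub_zero]
      exact adjMat_mulVec_nonneg E h.1 v
  · apply Finset.sum_eq_zero
    intro v _
    simp only [Pi.sub_apply, Pi.smul_apply, smul_eq_mul]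
    by_cases hv : v ∈ S
    · rw [h.2.2.2 v hv]; ring
    · rw [h.zero_of_not_mem hv]; ring

lemma exists_rightPair (E : V → V → Prop) (S : Set V) (hne : S.Nonempty)
    (hsc : ∀ a b : S, Relation.ReflTransGen (induceRel E S) a b) :
    ∃ ρ x, RightPair E S ρ x := by
  haveI : Nonempty S := hne.to_subtype
  obtain ⟨ρ, y, hρ, hy, heig⟩ := perron_exists (adjMat (induceRel E S)) (adjMat_nonneg _)
    (fun i j => Relation.ReflTransGen.mono (r := induceRel E S)
      (p := fun a b => 0 < adjMat (induceRel E S) a b) (fun a b hab => by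
      simp only [adjMat, Matrix.of_apply, if_pos hab]; norm_num) i j (hsc i j))
  set x : V → ℝ := fun v => if hv : v ∈ S then y ⟨v, hv⟩ else 0 with hxdef
  have hx0 : ∀ v ∉ S, x v = 0 := by
    intro v hv
    simp only [hxdef, dif_neg hv]
  have hxS : ∀ (v : V) (hv : v ∈ S), x v = y ⟨v, hv⟩ := by
    intro v hv
    simp only [hxdef, dif_pos hv]
  refine ⟨ρ, x, ?_, ?_, hρ, ?_⟩
  · intro v
    by_cases hv : v ∈ S
    · rw [hxS v hv]; exact (hy _).le
    · rw [hx0 v hv]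
  · intro v
    by_cases hv : v ∈ S
    · rw [hxS v hv]; exact ⟨fun _ => hv, fun _ => hy _⟩
    · rw [hx0 v hv]; exact ⟨fun hc => absurd rfl hc.ne, fun hc => absurd hc hv⟩
  · intro v hv
    have key : (adjMat E).mulVec x v = (adjMat (induceRel E S)).mulVec y ⟨v, hv⟩ := by
      show ∑ u : V, adjMat E v u * x u = ∑ u : S, adjMat (induceRel E S) ⟨v, hv⟩ u * y u
      have step1 : ∑ u : V, adjMat E v u * x u
          = ∑ u ∈ Finset.univ.filter (· ∈ S), adjMat E v u * x u := by
        symm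
        apply Finset.sum_filter_of_ne
        intro u _ hne0
        by_contra hu
        exact hne0 (by rw [hx0 u hu, mul_zero])
      rw [step1, Finset.sum_subtype (p := (· ∈ S)) (Finset.univ.filter (· ∈ S))
        (fun u => by simp) (fun u => adjMat E v u * x u)]
      apply Finset.sum_congr rfl
      intro u _
      rw [hxS u.1 u.2]
      rfl
    rw [key, heig]
    simp only [Pi.smul_apply, smul_eq_mul]
    rw [hxS v hv]

/-- weighted sum against a left (flipped) eigen pair. -/
lemma left_dot (E : V → V → Prop) {T : Set V} {ρ' : ℝ} {z : V → ℝ}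
    (hz : RightPair (fun a b => E b a) T ρ' z) {x : V → ℝ}
    (hsupp : ∀ u, x u ≠ 0 → u ∈ T) :
    ∑ v, z v * (adjMat E).mulVec x v = ρ' * ∑ v, z v * x v := by
  have step1 : ∑ v, z v * (adjMat E).mulVec x v
      = ∑ u, ((adjMat (fun a b => E b a)).mulVec z u) * x u := by
    simp only [Matrix.mulVec, dotProduct, Finset.mul_sum, Finset.sum_mul]
    rw [Finset.sum_comm]
    exact Finset.sum_congr rfl (fun u _ => Finset.sum_congr rfl (fun v _ => by
      simp only [adjMat, Matrix.of_apply]; ring))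
  rw [step1, Finset.mul_sum]
  apply Finset.sum_congr rfl
  intro u _
  by_cases hu : x u = 0
  · rw [hu]; ring
  · rw [hz.2.2.2 u (hsupp u hu)]; ring

lemma right_dot (E : V → V → Prop) {T : Set V} {ρT : ℝ} {xT : V → ℝ}
    (hxT : RightPair E T ρT xT) {z : V → ℝ} (hsupp : ∀ u, z u ≠ 0 → u ∈ T) :
    ∑ v, z v * (adjMat E).mulVec xT v = ρT * ∑ v, z v * xT v := by
  rw [Finset.mul_sum]
  apply Finset.sum_congr rfl
  intro v _
  by_cases hv : z v = 0
  · rw [hv]; ring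
  · rw [hxT.2.2.2 v (hsupp v hv)]; ring

lemma rightPair_lt (E : V → V → Prop) {S T : Set V} (hST : S ⊆ T)
    {ρS : ℝ} {x : V → ℝ} (hx : RightPair E S ρS x)
    {ρT : ℝ} {xT : V → ℝ} (hxT : RightPair E T ρT xT)
    {ρT' : ℝ} {z : V → ℝ} (hz : RightPair (fun a b => E b a) T ρT' z)
    {v' u₀ : V} (hv'T : v' ∈ T) (hv'S : v' ∉ S) (hu₀ : u₀ ∈ S) (hE : E v' u₀) :
    ρS < ρT := by
  have hzsuppT : ∀ u, z u ≠ 0 → u ∈ T :=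
    fun u hu => (hz.2.1 u).mp (lt_of_le_of_ne (hz.1 u) (Ne.symm hu))
  have hxTsupp : ∀ u, xT u ≠ 0 → u ∈ T :=
    fun u hu => (hxT.2.1 u).mp (lt_of_le_of_ne (hxT.1 u) (Ne.symm hu))
  have hxsupp : ∀ u, x u ≠ 0 → u ∈ T :=
    fun u hu => hST ((hx.2.1 u).mp (lt_of_le_of_ne (hx.1 u) (Ne.symm hu)))
  have zu₀ : 0 < z u₀ := (hz.2.1 u₀).mpr (hST hu₀)
  have xu₀ : 0 < x u₀ := (hx.2.1 u₀).mpr hu₀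
  have xTu₀ : 0 < xT u₀ := (hxT.2.1 u₀).mpr (hST hu₀)
  have pos1 : 0 < ∑ v, z v * xT v :=
    lt_of_lt_of_le (mul_pos zu₀ xTu₀)
      (Finset.single_le_sum (fun v _ => mul_nonneg (hz.1 v) (hxT.1 v)) (Finset.mem_univ u₀))
  have pos2 : 0 < ∑ v, z v * x v :=
    lt_of_lt_of_le (mul_pos zu₀ xu₀)
      (Finset.single_le_sum (fun v _ => mul_nonneg (hz.1 v) (hx.1 v)) (Finset.mem_univ u₀))
  have e1 := left_dot E hz hxTsupp
  have e2 := right_dot E hxT hzsuppT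
  have hTT' : ρT' = ρT := by
    have := e1.symm.trans e2
    exact mul_right_cancel₀ (ne_of_gt pos1) this
  have e3 := left_dot E hz hxsupp
  have e4 : ρS * ∑ v, z v * x v < ∑ v, z v * (adjMat E).mulVec x v := by
    rw [Finset.mul_sum]
    apply Finset.sum_lt_sum
    · intro v _
      by_cases hvS : v ∈ S
      · rw [hx.2.2.2 v hvS]
        exact le_of_eq (by ring)
      · rw [hx.zero_of_not_mem hvS, mul_zero, mul_zero]
        exact mul_nonneg (hz.1 v) (adjMat_mulVec_nonneg E hx.1 v)
    · refine ⟨v', Finset.mem_univ v', ?_⟩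
      rw [hx.zero_of_not_mem hv'S, mul_zero, mul_zero]
      have hz' : 0 < z v' := (hz.2.1 v').mpr hv'T
      have hmv : 0 < (adjMat E).mulVec x v' := by
        have h1 : adjMat E v' u₀ * x u₀ ≤ ∑ u, adjMat E v' u * x u :=
          Finset.single_le_sum
            (fun u _ => mul_nonneg (adjMat_nonneg E v' u) (hx.1 u)) (Finset.mem_univ u₀)
        have h2 : adjMat E v' u₀ = 1 := by
          simp only [adjMat, Matrix.of_apply, if_pos hE]
        have h3 : 0 < adjMat E v' u₀ * x u₀ := by rw [h2]; linarith
        exact lt_of_lt_of_le h3 h1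
      exact mul_pos hz' hmv
  rw [e3] at e4
  rw [← hTT']
  exact lt_of_mul_lt_mul_right e4 pos2.le

lemma reflTransGen_swap' {α : Type*} {r : α → α → Prop} {a b : α}
    (h : Relation.ReflTransGen r a b) : Relation.ReflTransGen (fun x y => r y x) b a := by
  induction h with
  | refl => exact Relation.ReflTransGen.refl
  | tail _ h2 ih => exact Relation.ReflTransGen.head h2 ih

lemma cycle_reach {m : ℕ} [NeZero m] {W : Type*} {R : W → W → Prop} {c : ZMod m → W}
    (hc : ∀ i, R (c i) (c (i + 1))) :
    ∀ i j : ZMod m, Relation.ReflTransGen R (c i) (c j) := by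
  have aux : ∀ (k : ℕ) (i : ZMod m), Relation.ReflTransGen R (c i) (c (i + (k : ZMod m))) := by
    intro k
    induction k with
    | zero => intro i; simpa using Relation.ReflTransGen.refl
    | succ k ih =>
        intro i
        have hcast : ((k + 1 : ℕ) : ZMod m) = (k : ZMod m) + 1 := by push_cast; ring
        rw [hcast, ← add_assoc]
        exact (ih i).tail (hc _)
  intro i j
  have hk : (((j - i).val : ℕ) : ZMod m) = j - i := ZMod.natCast_rightInverse (j - i)
  have := aux (j - i).val i
  rw [hk] at this
  have he : i + (j - i) = j := by ring
  rwa [he] at this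

lemma range_cycle_sc {m : ℕ} [NeZero m] {E : V → V → Prop} {c : ZMod m → V}
    (hc : ∀ i, E (c i) (c (i + 1))) :
    ∀ a b : ↥(Set.range c), Relation.ReflTransGen (induceRel E (Set.range c)) a b := by
  intro a b
  obtain ⟨i, hi⟩ := a.2
  obtain ⟨j, hj⟩ := b.2
  have h := cycle_reach (R := induceRel E (Set.range c))
    (c := fun i => (⟨c i, ⟨i, rfl⟩⟩ : ↥(Set.range c))) (fun i => hc i) i j
  have ha : (⟨c i, ⟨i, rfl⟩⟩ : ↥(Set.range c)) = a := Subtype.ext hi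
  have hb : (⟨c j, ⟨j, rfl⟩⟩ : ↥(Set.range c)) = b := Subtype.ext hj
  rwa [ha, hb] at h

lemma univ_sc {E : V → V → Prop} (hsc : StronglyConnected E) :
    ∀ a b : ↥(Set.univ : Set V),
      Relation.ReflTransGen (induceRel E Set.univ) a b := by
  have h : ∀ x y : V, Relation.ReflTransGen E x y →
      Relation.ReflTransGen (induceRel E Set.univ)
        ⟨x, Set.mem_univ x⟩ ⟨y, Set.mem_univ y⟩ := by
    intro x y hxy
    induction hxy with
    | refl => exact Relation.ReflTransGen.refl
    | tail _ h2 ih => exact ih.tail h2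
  intro a b
  rcases a with ⟨a, ha⟩
  rcases b with ⟨b, hb⟩
  exact h a b (hsc a b)

lemma component_sc {R : V → V → Prop} {w : V} :
    ∀ a b : ↥(component R w),
      Relation.ReflTransGen (induceRel R (component R w)) a b := by
  have aux : ∀ x y : V, Relation.ReflTransGen R x y →
      Relation.ReflTransGen R y w → Relation.ReflTransGen R w x →
      ∀ (hxm : x ∈ component R w) (hym : y ∈ component R w),
      Relation.ReflTransGen (induceRel R (component R w)) ⟨x, hxm⟩ ⟨y, hym⟩ := by
    intro x y hxy
    induction hxy using Relation.ReflTransGen.head_induction_on with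
    | refl =>
        intro _ _ hxm hym
        exact Relation.ReflTransGen.refl
    | @head p q hstep htail ih =>
        intro hyw hwx hpm hym
        have hqm : q ∈ component R w := ⟨htail.trans hyw, hwx.tail hstep⟩
        exact Relation.ReflTransGen.head
          (show induceRel R (component R w) ⟨p, hpm⟩ ⟨q, hqm⟩ from hstep)
          (ih hyw (hwx.tail hstep) hqm hym)
  intro a b
  rcases a with ⟨a, ha⟩
  rcases b with ⟨b, hb⟩
  exact aux a b (ha.1.trans hb.2) hb.1 ha.2 ha hb

lemma exists_crossing {R : V → V → Prop} {S : Set V} {a b : V}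
    (h : Relation.ReflTransGen R a b) (ha : a ∉ S) (hb : b ∈ S) :
    ∃ p q, p ∉ S ∧ q ∈ S ∧ R p q := by
  have gen : ∀ {a : V}, Relation.ReflTransGen R a b → a ∉ S →
      ∃ p q, p ∉ S ∧ q ∈ S ∧ R p q := by
    intro a h
    induction h using Relation.ReflTransGen.head_induction_on with
    | refl => intro hb'; exact absurd hb hb'
    | @head p q hstep htail ih =>
        intro hp
        by_cases hq : q ∈ S
        · exact ⟨p, q, hp, hq, hstep⟩
        · exact ih hq
  exact gen h ha


end Stmt17

/-- a strongly connected digraph with exactly three complementarity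
eigenvalues containing an `∞(r,s)`-subdigraph has exactly `r + s - 1` vertices. -/
theorem stmt17 {V : Type*} [Fintype V] (E : V → V → Prop) (r s : ℕ)
    (hr : 2 ≤ r) (hs : 2 ≤ s) (hloop : ∀ v, ¬ E v v) (hsc : StronglyConnected E)
    (h3 : (compSpec (adjMat E)).ncard = 3) (hsub : InftySub E r s) :
    Fintype.card V = r + s - 1 := by
  classical
  obtain ⟨f, g, hf, hg, hfg0, hint, hEf, hEg⟩ := hsub
  haveI : NeZero r := ⟨by omega⟩
  haveI : NeZero s := ⟨by omega⟩
  have hrne : (-1 : ZMod r) ≠ 0 := by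
    haveI : Fact (1 < r) := ⟨by omega⟩
    intro hc
    exact one_ne_zero (neg_eq_zero.mp hc)
  have hsne : (-1 : ZMod s) ≠ 0 := by
    haveI : Fact (1 < s) := ⟨by omega⟩
    intro hc
    exact one_ne_zero (neg_eq_zero.mp hc)
  set W : Set V := Set.range f ∪ Set.range g with hW
  have hWcard : W.ncard = r + s - 1 := by
    have h1 : (Set.range f).ncard = r := by
      rw [← Set.image_univ, Set.ncard_image_of_injective _ hf, Set.ncard_univ,
        Nat.card_eq_fintype_card, ZMod.card]
    have h2 : (Set.range g).ncard = s := by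
      rw [← Set.image_univ, Set.ncard_image_of_injective _ hg, Set.ncard_univ,
        Nat.card_eq_fintype_card, ZMod.card]
    have h4 := Set.ncard_union_add_ncard_inter (Set.range f) (Set.range g)
      (Set.toFinite _) (Set.toFinite _)
    rw [hint, Set.ncard_singleton, h1, h2] at h4
    rw [hW]
    omega
  by_cases hWU : W = Set.univ
  · rw [hWU, Set.ncard_univ, Nat.card_eq_fintype_card] at hWcard
    exact hWcard
  exfalso
  obtain ⟨v₀, hv₀⟩ : ∃ v₀, v₀ ∉ W := by
    by_contra hc
    push_neg at hc
    exact hWU (Set.eq_univ_of_forall hc)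
  have hfW : ∀ i, f i ∈ W := fun i => Or.inl ⟨i, rfl⟩
  have hgW : ∀ j, g j ∈ W := fun j => Or.inr ⟨j, rfl⟩
  set E' : V → V → Prop := fun a b => E a b ∧ a ≠ v₀ ∧ b ≠ v₀ with hE'def
  have hEf' : ∀ i, E' (f i) (f (i + 1)) := fun i =>
    ⟨hEf i, fun h => hv₀ (h ▸ hfW i), fun h => hv₀ (h ▸ hfW (i + 1))⟩
  have hEg' : ∀ j, E' (g j) (g (j + 1)) := fun j =>
    ⟨hEg j, fun h => hv₀ (h ▸ hgW j), fun h => hv₀ (h ▸ hgW (j + 1))⟩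
  have hfreach : ∀ i j, Relation.ReflTransGen E' (f i) (f j) := Stmt17.cycle_reach hEf'
  have hgreach : ∀ i j, Relation.ReflTransGen E' (g i) (g j) := Stmt17.cycle_reach hEg'
  set S1 : Set V := component E' (f 0) with hS1def
  have hWS1 : ∀ u ∈ W, u ∈ S1 := by
    intro u hu
    rcases hu with ⟨i, rfl⟩ | ⟨j, rfl⟩
    · exact ⟨hfreach i 0, hfreach 0 i⟩
    · have h00 : Relation.ReflTransGen E' (g j) (f 0) := by
        rw [hfg0]; exact hgreach j 0
      have h01 : Relation.ReflTransGen E' (f 0) (g j) := by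
        rw [hfg0]; exact hgreach 0 j
      exact ⟨h00, h01⟩
  have hv₀S1 : v₀ ∉ S1 := by
    intro hv
    rcases Relation.ReflTransGen.cases_head hv.1 with heq | ⟨c, hc, _⟩
    · exact hv₀ (heq ▸ hfW 0)
    · exact hc.2.1 rfl
  set x0 : V → ℝ := fun v => if v = f 0 then 1 else 0 with hx0def
  have hx0eval : ∀ v, x0 v = if v = f 0 then 1 else 0 := fun v => rfl
  have p0 : Stmt17.RightPair E {f 0} 0 x0 := by
    refine ⟨?_, ?_, le_refl 0, ?_⟩
    · intro v
      rw [hx0eval v]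
      split <;> norm_num
    · intro v
      rw [hx0eval v]
      by_cases hv : v = f 0
      · rw [if_pos hv]
        simp [Set.mem_singleton_iff, hv]
      · rw [if_neg hv]
        simp [Set.mem_singleton_iff, hv]
    · intro v hv
      rw [Set.mem_singleton_iff] at hv
      subst hv
      have hmv : (adjMat E).mulVec x0 (f 0) = adjMat E (f 0) (f 0) := by
        show ∑ u, adjMat E (f 0) u * x0 u = _
        simp only [hx0eval, mul_ite, mul_one, mul_zero]
        rw [Finset.sum_ite_eq' Finset.univ (f 0) (fun u => adjMat E (f 0) u)]
        simp
      rw [hmv, zero_mul]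
      simp [adjMat, hloop (f 0)]
  have hSfne : (Set.range f).Nonempty := ⟨f 0, 0, rfl⟩
  have hSfsc := Stmt17.range_cycle_sc (E := E) (c := f) hEf
  obtain ⟨ρf, xf, hpf⟩ := Stmt17.exists_rightPair E (Set.range f) hSfne hSfsc
  obtain ⟨ρf', zf, hpf'⟩ := Stmt17.exists_rightPair (fun a b => E b a) (Set.range f) hSfne
    (fun a b => Stmt17.reflTransGen_swap' (hSfsc b a))
  have hS1ne : S1.Nonempty := ⟨f 0, hWS1 _ (hfW 0)⟩
  have hS1sc : ∀ a b : S1, Relation.ReflTransGen (induceRel E S1) a b :=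
    fun a b => Relation.ReflTransGen.mono (r := induceRel E' S1) (p := induceRel E S1) (fun p q hpq => hpq.1) a b (Stmt17.component_sc a b)
  obtain ⟨ρ1, x1, hp1⟩ := Stmt17.exists_rightPair E S1 hS1ne hS1sc
  obtain ⟨ρ1', z1, hp1'⟩ := Stmt17.exists_rightPair (fun a b => E b a) S1 hS1ne
    (fun a b => Stmt17.reflTransGen_swap' (hS1sc b a))
  have hUne : (Set.univ : Set V).Nonempty := ⟨f 0, Set.mem_univ _⟩
  have hUsc := Stmt17.univ_sc hsc
  obtain ⟨ρu, xu, hpu⟩ := Stmt17.exists_rightPair E Set.univ hUne hUsc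
  obtain ⟨ρu', zu, hpu'⟩ := Stmt17.exists_rightPair (fun a b => E b a) Set.univ hUne
    (fun a b => Stmt17.reflTransGen_swap' (hUsc b a))
  have hfm1 : f (-1) ∈ Set.range f := ⟨-1, rfl⟩
  have hfm1ne : f (-1) ∉ ({f 0} : Set V) := by
    simp only [Set.mem_singleton_iff]
    intro hc
    exact hrne (hf hc)
  have hEfm1 : E (f (-1)) (f 0) := by
    have h := hEf (-1)
    have h01 : (-1 : ZMod r) + 1 = 0 := by ring
    rwa [h01] at h
  have lt1 : (0:ℝ) < ρf :=
    Stmt17.rightPair_lt E (show ({f 0} : Set V) ⊆ Set.range f from Set.singleton_subset_iff.mpr ⟨0, rfl⟩) p0 hpf hpf'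
      hfm1 hfm1ne rfl hEfm1
  have hgm1S1 : g (-1) ∈ S1 := hWS1 _ (hgW (-1))
  have hgm1f : g (-1) ∉ Set.range f := by
    intro hc
    have hmem : g (-1) ∈ Set.range f ∩ Set.range g := ⟨hc, ⟨-1, rfl⟩⟩
    rw [hint] at hmem
    rw [Set.mem_singleton_iff] at hmem
    have hgg : g (-1) = g 0 := by rw [hmem, hfg0]
    exact hsne (hg hgg)
  have hEgm1 : E (g (-1)) (f 0) := by
    have h := hEg (-1)
    have h01 : (-1 : ZMod s) + 1 = 0 := by ring
    rw [h01] at h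
    rwa [← hfg0] at h
  have hSfS1 : Set.range f ⊆ S1 := fun u hu => hWS1 u (Or.inl hu)
  have lt2 : ρf < ρ1 :=
    Stmt17.rightPair_lt E hSfS1 hpf hp1 hp1' hgm1S1 hgm1f ⟨0, rfl⟩ hEgm1
  obtain ⟨p, q, hpS, hqS, hpq⟩ :=
    Stmt17.exists_crossing (hsc v₀ (f 0)) hv₀S1 (hWS1 _ (hfW 0))
  have lt3 : ρ1 < ρu :=
    Stmt17.rightPair_lt E (Set.subset_univ S1) hp1 hpu hpu' (Set.mem_univ p) hpS hqS hpq
  have m0 := Stmt17.rightPair_mem (show ({f 0} : Set V).Nonempty from ⟨f 0, rfl⟩) p0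
  have mf := Stmt17.rightPair_mem hSfne hpf
  have m1 := Stmt17.rightPair_mem hS1ne hp1
  have mu := Stmt17.rightPair_mem hUne hpu
  have hfin : (compSpec (adjMat E)).Finite := by
    by_contra hinf
    rw [Set.Infinite.ncard hinf] at h3
    omega
  have hsub4 : ({(0:ℝ), ρf, ρ1, ρu} : Set ℝ) ⊆ compSpec (adjMat E) := by
    intro t ht
    simp only [Set.mem_insert_iff, Set.mem_singleton_iff] at ht
    rcases ht with rfl | rfl | rfl | rfl
    exacts [m0, mf, m1, mu]
  have hcard4 : ({(0:ℝ), ρf, ρ1, ρu} : Set ℝ).ncard = 4 := by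
    have d01 : (0:ℝ) ≠ ρf := lt1.ne
    have d02 : (0:ℝ) ≠ ρ1 := (lt1.trans lt2).ne
    have d03 : (0:ℝ) ≠ ρu := ((lt1.trans lt2).trans lt3).ne
    have d12 : ρf ≠ ρ1 := lt2.ne
    have d13 : ρf ≠ ρu := (lt2.trans lt3).ne
    have d23 : ρ1 ≠ ρu := lt3.ne
    rw [Set.ncard_insert_of_notMem (by simp [d01, d02, d03])
        ((Set.finite_singleton _).insert _ |>.insert _),
      Set.ncard_insert_of_notMem (by simp [d12, d13])
        ((Set.finite_singleton _).insert _),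
      Set.ncard_insert_of_notMem (by simp [d23]) (Set.finite_singleton _),
      Set.ncard_singleton]
  have hle := Set.ncard_le_ncard hsub4 hfin
  rw [hcard4, h3] at hle
  omega
end
end

section
/- If D is a strongly connected finite digraph with exactly three complementarity eigenvalues containing a θ(a,b,c)-subdigraph, then D has exactly a + b + c + 2 vertices. -/
open Matrix
open scoped Classical

noncomputable section

set_option linter.unusedSectionVars false

section MatrixAux
variable {V : Type*} [Fintype V]

lemma adjMat_nonneg (E : V → V → Prop) (i j : V) : 0 ≤ adjMat E i j := by
  unfold adjMat; dsimp only [Matrix.of_apply]; split <;> norm_num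

lemma mulVec_adj (E : V → V → Prop) (x : V → ℝ) (v : V) :
    (adjMat E).mulVec x v = ∑ u, if E v u then x u else 0 := by
  simp only [Matrix.mulVec, dotProduct, adjMat, Matrix.of_apply, ite_mul, one_mul,
    zero_mul]

lemma mulVec_nonneg {A : Matrix V V ℝ} (hA : ∀ i j, 0 ≤ A i j) {x : V → ℝ}
    (hx : ∀ i, 0 ≤ x i) (i : V) : 0 ≤ A.mulVec x i :=
  Finset.sum_nonneg fun j _ => mul_nonneg (hA i j) (hx j)

lemma pow_entry_nonneg {A : Matrix V V ℝ} (hA : ∀ i j, 0 ≤ A i j) (k : ℕ) (i j : V) :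
    0 ≤ (A ^ k) i j := by
  induction k generalizing i j with
  | zero => rw [pow_zero, Matrix.one_apply]; split <;> norm_num
  | succ k ih =>
      rw [pow_succ, Matrix.mul_apply]
      exact Finset.sum_nonneg fun m _ => mul_nonneg (ih i m) (hA m j)

lemma pow_entry_pos_of_reach {E : V → V → Prop} {i j : V}
    (h : Relation.ReflTransGen E i j) : ∃ k, 0 < ((adjMat E) ^ k) i j := by
  induction h with
  | refl => exact ⟨0, by simp⟩
  | @tail b c hab hbc ih =>
      obtain ⟨k, hk⟩ := ih
      refine ⟨k + 1, ?_⟩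
      rw [pow_succ, Matrix.mul_apply]
      have h1 : 0 < ((adjMat E) ^ k) i b * adjMat E b c := by
        apply mul_pos hk
        simp [adjMat, hbc]
      refine lt_of_lt_of_le h1 ?_
      exact Finset.single_le_sum (fun m _ =>
        mul_nonneg (pow_entry_nonneg (adjMat_nonneg E) k i m) (adjMat_nonneg E m c))
        (Finset.mem_univ b)

lemma exists_posMat (A : Matrix V V ℝ) [Nonempty V] (hA : ∀ i j, 0 ≤ A i j)
    (hirr : ∀ i j, ∃ k, 0 < (A ^ k) i j) :
    ∃ B : Matrix V V ℝ, A * B = B * A ∧ (∀ i j, 0 < B i j) := by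
  choose f hf using hirr
  set m := Finset.univ.sup (fun p : V × V => f p.1 p.2) with hm
  refine ⟨∑ k ∈ Finset.range (m + 1), A ^ k, ?_, ?_⟩
  · rw [Finset.mul_sum, Finset.sum_mul]
    exact Finset.sum_congr rfl fun k _ => (Commute.pow_self A k).symm
  · intro i j
    rw [Matrix.sum_apply]
    apply Finset.sum_pos' (fun k _ => pow_entry_nonneg hA k i j)
    refine ⟨f i j, Finset.mem_range.2 ?_, hf i j⟩
    have : f i j ≤ m := Finset.le_sup (f := fun p : V × V => f p.1 p.2)
      (Finset.mem_univ (i, j))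
    omega

lemma mulVec_pos {B : Matrix V V ℝ} (hB : ∀ i j, 0 < B i j) {x : V → ℝ}
    (hx : ∀ i, 0 ≤ x i) (hex : ∃ j, 0 < x j) (i : V) : 0 < B.mulVec x i := by
  obtain ⟨j0, hj0⟩ := hex
  apply Finset.sum_pos' (fun j _ => mul_nonneg (hB i j).le (hx j))
  exact ⟨j0, Finset.mem_univ j0, mul_pos (hB i j0) hj0⟩

end MatrixAux

section PF
variable {V : Type*} [Fintype V]

example : IsClosed (stdSimplex ℝ V) := isClosed_stdSimplex ℝ V

lemma perron_exists (A : Matrix V V ℝ) [Nonempty V] (hA : ∀ i j, 0 ≤ A i j)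
    (hirr : ∀ i j, ∃ k, 0 < (A ^ k) i j) :
    ∃ (lam : ℝ) (x : V → ℝ), 0 ≤ lam ∧ (∀ i, 0 < x i) ∧
      ∀ i, A.mulVec x i = lam * x i := by
  classical
  set Δ := stdSimplex ℝ V with hΔdef
  set L : Set ℝ := {lam | 0 ≤ lam ∧ ∃ x ∈ Δ, ∀ i, lam * x i ≤ A.mulVec x i} with hL
  -- a point of the simplex
  have hcardpos : 0 < (Fintype.card V : ℝ) := by
    exact_mod_cast Fintype.card_pos
  have hxc : (fun _ : V => (Fintype.card V : ℝ)⁻¹) ∈ Δ := by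
    constructor
    · intro i; positivity
    · rw [Finset.sum_const, Finset.card_univ, nsmul_eq_mul]
      rw [mul_inv_cancel₀ (ne_of_gt hcardpos)]
  have h0L : (0 : ℝ) ∈ L := by
    refine ⟨le_refl 0, fun _ => (Fintype.card V : ℝ)⁻¹, hxc, fun i => ?_⟩
    rw [zero_mul]
    exact mulVec_nonneg hA (fun _ => by positivity) i
  have hLne : L.Nonempty := ⟨0, h0L⟩
  -- bounded above
  set M : ℝ := ∑ i, ∑ j, A i j with hM
  have hbdd : ∀ lam ∈ L, lam ≤ M := by
    rintro lam ⟨hlam0, x, hxΔ, hineq⟩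
    obtain ⟨i, _, hi⟩ := Finset.exists_max_image Finset.univ x ⟨Classical.arbitrary V, Finset.mem_univ _⟩
    have hxi : 0 < x i := by
      by_contra h
      push_neg at h
      have : ∑ j, x j ≤ 0 := by
        apply Finset.sum_nonpos
        intro j _
        exact le_trans (hi j (Finset.mem_univ j)) h
      rw [hxΔ.2] at this; linarith
    have h1 : lam * x i ≤ A.mulVec x i := hineq i
    have h2 : A.mulVec x i ≤ (∑ j, A i j) * x i := by
      rw [Finset.sum_mul]
      exact Finset.sum_le_sum fun j _ =>
        mul_le_mul_of_nonneg_left (hi j (Finset.mem_univ j)) (hA i j)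
    have h3 : (∑ j, A i j) ≤ M := by
      apply Finset.single_le_sum (f := fun i => ∑ j, A i j)
        (fun i _ => Finset.sum_nonneg fun j _ => hA i j) (Finset.mem_univ i)
    have := le_trans h1 (le_trans h2 (mul_le_mul_of_nonneg_right h3 hxi.le))
    exact le_of_mul_le_mul_right this hxi
  have hbddL : BddAbove L := ⟨M, fun lam hl => hbdd lam hl⟩
  set lamstar : ℝ := sSup L with hls
  have hlam0 : 0 ≤ lamstar := le_csSup hbddL h0L
  -- compact nested sets
  haveI : Nonempty L := ⟨⟨0, h0L⟩⟩
  set Z : L → Set (V → ℝ) := fun l => Δ ∩ ⋂ i, {x | l.1 * x i ≤ A.mulVec x i} with hZ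
  have hcont : ∀ (c : ℝ) (i : V), Continuous fun x : V → ℝ => c * x i :=
    fun c i => continuous_const.mul (continuous_apply i)
  have hcontA : ∀ i : V, Continuous fun x : V → ℝ => A.mulVec x i := by
    intro i
    simp only [Matrix.mulVec, dotProduct]
    exact continuous_finset_sum _ fun j _ => continuous_const.mul (continuous_apply j)
  have hZmem : ∀ (l : L) (x : V → ℝ), x ∈ Z l ↔ (x ∈ Δ ∧ ∀ i, l.1 * x i ≤ A.mulVec x i) := by
    intro l x
    simp only [hZ, Set.mem_inter_iff, Set.mem_iInter, Set.mem_setOf_eq]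
  have hZclosed : ∀ l, IsClosed (Z l) := by
    intro l
    exact IsClosed.inter (isClosed_stdSimplex ℝ V)
      (isClosed_iInter fun i => isClosed_le (hcont l.1 i) (hcontA i))
  have hZcompact : ∀ l, IsCompact (Z l) := fun l =>
    (isCompact_stdSimplex ℝ V).of_isClosed_subset (hZclosed l)
      (fun x hx => ((hZmem l x).1 hx).1)
  have hZne : ∀ l : L, (Z l).Nonempty := by
    rintro ⟨lam, _, x, hxΔ, hineq⟩
    exact ⟨x, (hZmem _ x).2 ⟨hxΔ, hineq⟩⟩
  have hZdir : Directed (fun x1 x2 : Set (V → ℝ) => x1 ⊇ x2) Z := by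
    rintro l1 l2
    rcases le_total l1.1 l2.1 with h | h
    · refine ⟨l2, fun x hx => ?_, fun x hx => hx⟩
      obtain ⟨h1, h2⟩ := (hZmem l2 x).1 hx
      exact (hZmem l1 x).2 ⟨h1, fun i =>
        le_trans (mul_le_mul_of_nonneg_right h (h1.1 i)) (h2 i)⟩
    · refine ⟨l1, fun x hx => hx, fun x hx => ?_⟩
      obtain ⟨h1, h2⟩ := (hZmem l1 x).1 hx
      exact (hZmem l2 x).2 ⟨h1, fun i =>
        le_trans (mul_le_mul_of_nonneg_right h (h1.1 i)) (h2 i)⟩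
  obtain ⟨xstar, hxstar⟩ := IsCompact.nonempty_iInter_of_directed_nonempty_isCompact_isClosed
    Z hZdir hZne hZcompact hZclosed
  rw [Set.mem_iInter] at hxstar
  have hxΔ : xstar ∈ Δ := ((hZmem ⟨0, h0L⟩ xstar).1 (hxstar ⟨0, h0L⟩)).1
  have hstar : ∀ i, lamstar * xstar i ≤ A.mulVec xstar i := by
    intro i
    rcases eq_or_lt_of_le (hxΔ.1 i) with h | h
    · rw [← h, mul_zero]
      exact mulVec_nonneg hA hxΔ.1 i
    · have hle : lamstar ≤ A.mulVec xstar i / xstar i := by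
        apply csSup_le hLne
        intro lam hlam
        rw [le_div_iff₀ h]
        exact ((hZmem ⟨lam, hlam⟩ xstar).1 (hxstar ⟨lam, hlam⟩)).2 i
      calc lamstar * xstar i ≤ (A.mulVec xstar i / xstar i) * xstar i :=
            mul_le_mul_of_nonneg_right hle h.le
        _ = A.mulVec xstar i := div_mul_cancel₀ _ (ne_of_gt h)
  -- the positive matrix B
  obtain ⟨B, hcomm, hBpos⟩ := exists_posMat A hA hirr
  have hxex : ∃ j, 0 < xstar j := by
    by_contra h
    push_neg at h
    have : ∑ j, xstar j ≤ 0 := Finset.sum_nonpos fun j _ => h j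
    rw [hxΔ.2] at this; linarith
  set z : V → ℝ := B.mulVec xstar with hz
  have hzpos : ∀ i, 0 < z i := fun i => mulVec_pos hBpos hxΔ.1 hxex i
  set y : V → ℝ := fun i => A.mulVec xstar i - lamstar * xstar i with hy
  have hy0 : ∀ i, 0 ≤ y i := fun i => sub_nonneg.2 (hstar i)
  have hABz : ∀ w : V → ℝ, A.mulVec (B.mulVec w) = B.mulVec (A.mulVec w) := by
    intro w
    rw [Matrix.mulVec_mulVec, Matrix.mulVec_mulVec, hcomm]
  have hAxstar : A.mulVec xstar = fun i => lamstar * xstar i + y i := by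
    funext i; simp [hy]
  by_cases hyzero : ∀ i, y i = 0
  · refine ⟨lamstar, z, hlam0, hzpos, fun i => ?_⟩
    have : A.mulVec xstar = lamstar • xstar := by
      funext i
      have := hyzero i
      simp only [hy] at this
      simpa [Pi.smul_apply, smul_eq_mul] using by linarith
    calc A.mulVec z i = B.mulVec (A.mulVec xstar) i := by rw [hz, hABz]
      _ = B.mulVec (lamstar • xstar) i := by rw [this]
      _ = lamstar * z i := by rw [Matrix.mulVec_smul]; simp [hz]
  · push_neg at hyzero
    obtain ⟨i0, hi0⟩ := hyzero
    have hyex : ∃ j, 0 < y j := ⟨i0, lt_of_le_of_ne (hy0 i0) (Ne.symm hi0)⟩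
    set w : V → ℝ := B.mulVec y with hw
    have hwpos : ∀ i, 0 < w i := fun i => mulVec_pos hBpos hy0 hyex i
    have hAz : ∀ i, A.mulVec z i = lamstar * z i + w i := by
      intro i
      have : A.mulVec z = B.mulVec (A.mulVec xstar) := by rw [hz, hABz]
      rw [this, hAxstar]
      have : (fun i => lamstar * xstar i + y i) = lamstar • xstar + y := by
        funext j; simp
      rw [this, Matrix.mulVec_add, Matrix.mulVec_smul]
      simp [hz, hw]
    -- epsilon
    obtain ⟨i1, _, hi1⟩ := Finset.exists_min_image Finset.univ (fun i => w i / z i)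
      ⟨Classical.arbitrary V, Finset.mem_univ _⟩
    set ε : ℝ := w i1 / z i1 with hε
    have hεpos : 0 < ε := div_pos (hwpos i1) (hzpos i1)
    have hεle : ∀ i, ε * z i ≤ w i := by
      intro i
      have h1 : ε ≤ w i / z i := hi1 i (Finset.mem_univ i)
      calc ε * z i ≤ (w i / z i) * z i := mul_le_mul_of_nonneg_right h1 (hzpos i).le
        _ = w i := div_mul_cancel₀ _ (ne_of_gt (hzpos i))
    set s : ℝ := ∑ i, z i with hs
    have hspos : 0 < s := Finset.sum_pos (fun i _ => hzpos i) Finset.univ_nonempty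
    have hmem : lamstar + ε ∈ L := by
      refine ⟨by linarith, fun i => z i / s, ⟨fun i => div_nonneg (hzpos i).le hspos.le, ?_⟩, ?_⟩
      · rw [← Finset.sum_div, ← hs, div_self (ne_of_gt hspos)]
      · intro i
        have hrw : (fun i => z i / s) = s⁻¹ • z := by
          funext j; simp [div_eq_inv_mul]
        rw [hrw, Matrix.mulVec_smul]
        simp only [Pi.smul_apply, smul_eq_mul]
        rw [hAz i]
        have h2 : (lamstar + ε) * z i ≤ lamstar * z i + w i := by
          have h3 := hεle i
          calc (lamstar + ε) * z i = lamstar * z i + ε * z i := by ring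
            _ ≤ lamstar * z i + w i := by linarith
        calc (lamstar + ε) * (s⁻¹ * z i) = s⁻¹ * ((lamstar + ε) * z i) := by ring
          _ ≤ s⁻¹ * (lamstar * z i + w i) := by
              exact mul_le_mul_of_nonneg_left h2 (by positivity)
    have : lamstar + ε ≤ lamstar := le_csSup hbddL hmem
    linarith

end PF

section Digraph
variable {V : Type*} [Fintype V]

/-- Reachability staying inside `S`. -/
def ReachIn {V : Type*} (E : V → V → Prop) (S : Set V) : V → V → Prop :=
  Relation.ReflTransGen (fun a b => a ∈ S ∧ b ∈ S ∧ E a b)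

omit [Fintype V] in
lemma reachIn_lift {E : V → V → Prop} {S : Set V} {v u : V}
    (h : ReachIn E S v u) (hv : v ∈ S) :
    ∀ hu : u ∈ S, Relation.ReflTransGen (induceRel E S) ⟨v, hv⟩ ⟨u, hu⟩ := by
  induction h with
  | refl => intro hu; exact Relation.ReflTransGen.refl
  | @tail b c hab hbc ih =>
      intro hu
      exact Relation.ReflTransGen.tail (ih hbc.1) hbc.2.2

/-- Positive-on-support eigendata. -/
def SuppEig (E : V → V → Prop) (S : Set V) (lam : ℝ) (x : V → ℝ) : Prop :=
  (∀ v, 0 ≤ x v) ∧ (∀ v, 0 < x v ↔ v ∈ S) ∧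
    ∀ v ∈ S, (adjMat E).mulVec x v = lam * x v

lemma suppEig_x_eq_zero {E : V → V → Prop} {S : Set V} {lam : ℝ} {x : V → ℝ}
    (h : SuppEig E S lam x) {v : V} (hv : v ∉ S) : x v = 0 := by
  rcases eq_or_lt_of_le (h.1 v) with h' | h'
  · exact h'.symm
  · exact absurd ((h.2.1 v).1 h') hv

lemma suppEig_mem_compSpec {E : V → V → Prop} {S : Set V} {lam : ℝ} {x : V → ℝ}
    (h : SuppEig E S lam x) (hne : S.Nonempty) : lam ∈ compSpec (adjMat E) := by
  obtain ⟨v0, hv0⟩ := hne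
  obtain ⟨hx0, hsupp, heig⟩ := h
  refine ⟨x, ?_, ?_, ?_, ?_⟩
  · intro hx
    have := (hsupp v0).2 hv0
    rw [hx] at this
    simp at this
  · intro v; exact hx0 v
  · intro v
    simp only [Pi.sub_apply, Pi.smul_apply, smul_eq_mul, Pi.zero_apply]
    by_cases hv : v ∈ S
    · rw [heig v hv]; simp
    · have hxv : x v = 0 := suppEig_x_eq_zero ⟨hx0, hsupp, heig⟩ hv
      rw [hxv, mul_zero, sub_zero]
      exact mulVec_nonneg (adjMat_nonneg E) hx0 v
  · apply Finset.sum_eq_zero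
    intro v _
    simp only [Pi.sub_apply, Pi.smul_apply, smul_eq_mul]
    by_cases hv : v ∈ S
    · rw [heig v hv]; ring
    · rw [suppEig_x_eq_zero ⟨hx0, hsupp, heig⟩ hv]; ring

/-- Existence of positive-on-support eigendata on a strongly connected induced set. -/
lemma exists_suppEig (E : V → V → Prop) (S : Set V) (hne : S.Nonempty)
    (hsc : ∀ v ∈ S, ∀ u ∈ S, ReachIn E S v u) :
    ∃ lam x, 0 ≤ lam ∧ SuppEig E S lam x := by
  haveI : Nonempty S := hne.to_subtype
  obtain ⟨lam, x0, hlam0, hx0pos, heig0⟩ :=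
    perron_exists (adjMat (induceRel E S)) (adjMat_nonneg _)
      (fun i j => pow_entry_pos_of_reach (reachIn_lift (hsc i.1 i.2 j.1 j.2) i.2 j.2))
  set x : V → ℝ := fun v => if h : v ∈ S then x0 ⟨v, h⟩ else 0 with hx
  have hxval : ∀ (v : V) (hv : v ∈ S), x v = x0 ⟨v, hv⟩ := by
    intro v hv; simp [hx, hv]
  refine ⟨lam, x, hlam0, fun v => ?_, fun v => ?_, fun v hv => ?_⟩
  · by_cases hv : v ∈ S
    · rw [hxval v hv]; exact (hx0pos _).le
    · simp [hx, hv]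
  · constructor
    · intro hpos
      by_contra hv
      simp [hx, hv] at hpos
    · intro hv
      rw [hxval v hv]; exact hx0pos _
  · -- the sum over V equals the sum over S
    have hsum : (adjMat E).mulVec x v = (adjMat (induceRel E S)).mulVec x0 ⟨v, hv⟩ := by
      rw [mulVec_adj, mulVec_adj]
      have h1 : ∑ u : V, (if E v u then x u else 0)
          = ∑ u ∈ Finset.univ.filter (fun u => u ∈ S), (if E v u then x u else 0) := by
        symm
        apply Finset.sum_subset (Finset.filter_subset _ _)
        intro u _ hu
        simp only [Finset.mem_filter, Finset.mem_univ, true_and] at hu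
        simp [hx, hu]
      rw [h1]
      rw [Finset.sum_subtype (p := fun u => u ∈ S) (Finset.univ.filter (fun u => u ∈ S))
        (by intro u; simp) (fun u => if E v u then x u else 0)]
      apply Finset.sum_congr rfl
      intro u _
      by_cases hE : E v u
      · simp only [hE, if_pos, induceRel, hxval u.1 u.2]
      · simp [hE, induceRel]
    rw [hsum, heig0, hxval v hv]

/-- lam = 0 with a singleton support. -/
lemma zero_mem_compSpec (E : V → V → Prop) (hloop : ∀ v, ¬ E v v) (v0 : V) :
    (0 : ℝ) ∈ compSpec (adjMat E) := by
  have hS : SuppEig E {v0} 0 (fun v => if v = v0 then 1 else 0) := by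
    refine ⟨fun v => ?_, fun v => ?_, fun v hv => ?_⟩
    · by_cases h : v = v0 <;> simp [h]
    · by_cases h : v = v0 <;> simp [h, Set.mem_singleton_iff]
    · simp only [Set.mem_singleton_iff] at hv
      subst hv
      rw [mulVec_adj, zero_mul]
      apply Finset.sum_eq_zero
      intro u _
      by_cases hu : u = v
      · subst hu; simp [hloop u]
      · simp [hu]
  exact suppEig_mem_compSpec hS ⟨v0, rfl⟩

end Digraph

section Digraph2
variable {V : Type*} [Fintype V]

lemma ite_term_nonneg {P : Prop} {r : ℝ} (hr : 0 ≤ r) :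
    0 ≤ if P then r else 0 := by
  split
  · exact hr
  · exact le_refl 0

/-- A minimal "every vertex has an out-neighbour inside" set has unique out-neighbours. -/
lemma exists_cycle_set (E : V → V → Prop) [Nonempty V] (hout : ∀ v : V, ∃ u, E v u) :
    ∃ s : Finset V, s.Nonempty ∧ ∀ v ∈ s, ∃ u ∈ s, E v u ∧ ∀ u' ∈ s, E v u' → u' = u := by
  classical
  set Good : Finset V → Prop := fun s => s.Nonempty ∧ ∀ v ∈ s, ∃ u ∈ s, E v u with hGood
  have hU : Good Finset.univ := by
    refine ⟨Finset.univ_nonempty, fun v _ => ?_⟩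
    obtain ⟨u, hu⟩ := hout v
    exact ⟨u, Finset.mem_univ u, hu⟩
  have hex : ∃ k, ∃ s, Good s ∧ s.card = k := ⟨Finset.univ.card, Finset.univ, hU, rfl⟩
  obtain ⟨s, hGs, hscard⟩ := Nat.find_spec hex
  have hmin : ∀ t : Finset V, Good t → s.card ≤ t.card := by
    intro t ht
    rw [hscard]
    exact Nat.find_le ⟨t, ht, rfl⟩
  -- any selection function's orbit cycle must equal s
  have korbit : ∀ f : V → V, (∀ v ∈ s, f v ∈ s ∧ E v (f v)) →
      (Finset.image f s = s ∧ Set.InjOn f ↑s) := by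
    intro f hf
    obtain ⟨v0, hv0⟩ := hGs.1
    have horb : ∀ k : ℕ, f^[k] v0 ∈ s := by
      intro k
      induction k with
      | zero => simpa using hv0
      | succ k ih => rw [Function.iterate_succ_apply']; exact (hf _ ih).1
    obtain ⟨i, j, hij, hgij⟩ : ∃ i j : ℕ, i < j ∧ f^[i] v0 = f^[j] v0 := by
      obtain ⟨i, j, hne, heq⟩ := Finite.exists_ne_map_eq_of_infinite (fun k : ℕ => (⟨f^[k] v0, horb k⟩ : {x // x ∈ s}))
      rcases lt_or_gt_of_ne hne with h | h
      · exact ⟨i, j, h, congrArg Subtype.val heq⟩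
      · exact ⟨j, i, h, (congrArg Subtype.val heq).symm⟩
    set t : Finset V := (Finset.Ico i j).image (fun k => f^[k] v0) with ht
    have htsub : t ⊆ s := by
      intro w hw
      rw [ht, Finset.mem_image] at hw
      obtain ⟨k, _, hk⟩ := hw
      rw [← hk]; exact horb k
    have hft : ∀ w ∈ t, f w ∈ t := by
      intro w hw
      rw [ht, Finset.mem_image] at hw ⊢
      obtain ⟨k, hkmem, hk⟩ := hw
      rw [Finset.mem_Ico] at hkmem
      by_cases hkj : k + 1 < j
      · exact ⟨k + 1, Finset.mem_Ico.2 ⟨by omega, hkj⟩, by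
          rw [Function.iterate_succ_apply', hk]⟩
      · have hk1 : k + 1 = j := by omega
        refine ⟨i, Finset.mem_Ico.2 ⟨le_refl i, by omega⟩, ?_⟩
        rw [hgij, ← hk1, Function.iterate_succ_apply', hk]
    have hGt : Good t := by
      refine ⟨⟨f^[i] v0, ?_⟩, fun v hv => ⟨f v, hft v hv, (hf v (htsub hv)).2⟩⟩
      rw [ht, Finset.mem_image]
      exact ⟨i, Finset.mem_Ico.2 ⟨le_refl i, hij⟩, rfl⟩
    have hts : t = s := Finset.eq_of_subset_of_card_le htsub (hmin t hGt)
    -- image f s = s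
    have himg : Finset.image f s = s := by
      apply Finset.Subset.antisymm
      · intro w hw
        rw [Finset.mem_image] at hw
        obtain ⟨v, hv, hfv⟩ := hw
        rw [← hfv]; exact (hf v hv).1
      · intro w hw
        rw [← hts] at hw
        rw [ht, Finset.mem_image] at hw
        obtain ⟨k, hkmem, hk⟩ := hw
        rw [Finset.mem_Ico] at hkmem
        rw [Finset.mem_image]
        by_cases hki : k = i
        · refine ⟨f^[j-1] v0, ?_, ?_⟩
          · rw [← hts, ht, Finset.mem_image]
            exact ⟨j - 1, Finset.mem_Ico.2 ⟨by omega, by omega⟩, rfl⟩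
          · have h1 : f (f^[j-1] v0) = f^[j-1+1] v0 :=
              (Function.iterate_succ_apply' f (j-1) v0).symm
            have h2 : j - 1 + 1 = j := by omega
            rw [h1, h2, ← hgij, ← hki]
            exact hk
        · refine ⟨f^[k-1] v0, ?_, ?_⟩
          · rw [← hts, ht, Finset.mem_image]
            exact ⟨k - 1, Finset.mem_Ico.2 ⟨by omega, by omega⟩, rfl⟩
          · have h1 : f (f^[k-1] v0) = f^[k-1+1] v0 :=
              (Function.iterate_succ_apply' f (k-1) v0).symm
            have h2 : k - 1 + 1 = k := by omega
            rw [h1, h2]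
            exact hk
    refine ⟨himg, ?_⟩
    have := Finset.injOn_of_card_image_eq (by rw [himg])
    exact this
  -- now uniqueness of out-neighbours
  refine ⟨s, hGs.1, fun v hv => ?_⟩
  obtain ⟨u, hu, hEu⟩ := hGs.2 v hv
  refine ⟨u, hu, hEu, fun u' hu' hEu' => ?_⟩
  by_contra hne
  -- two selection functions
  have hsel : ∃ g : V → V, ∀ w ∈ s, g w ∈ s ∧ E w (g w) := by
    choose g hg1 hg2 using hGs.2
    refine ⟨fun w => if h : w ∈ s then g w h else w, fun w hw => ?_⟩
    simp only [dif_pos hw]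
    exact ⟨hg1 w hw, hg2 w hw⟩
  obtain ⟨g, hg⟩ := hsel
  set f1 : V → V := fun w => if w = v then u else g w with hf1
  set f2 : V → V := fun w => if w = v then u' else g w with hf2
  have hP1 : ∀ w ∈ s, f1 w ∈ s ∧ E w (f1 w) := by
    intro w hw
    by_cases h : w = v
    · subst h; simp only [hf1, if_pos rfl]; exact ⟨hu, hEu⟩
    · simp only [hf1, if_neg h]; exact hg w hw
  have hP2 : ∀ w ∈ s, f2 w ∈ s ∧ E w (f2 w) := by
    intro w hw
    by_cases h : w = v
    · subst h; simp only [hf2, if_pos rfl]; exact ⟨hu', hEu'⟩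
    · simp only [hf2, if_neg h]; exact hg w hw
  obtain ⟨himg1, hinj1⟩ := korbit f1 hP1
  obtain ⟨himg2, hinj2⟩ := korbit f2 hP2
  -- u = f1 v ∈ image f2 s
  have hu_img : u ∈ Finset.image f2 s := by rw [himg2]; exact hu
  rw [Finset.mem_image] at hu_img
  obtain ⟨p, hp, hpu⟩ := hu_img
  have hpv : p ≠ v := by
    intro h
    subst h
    simp only [hf2, if_pos rfl] at hpu
    exact hne (hpu.symm ▸ rfl)
  have hf2p : f2 p = g p := by simp only [hf2, if_neg hpv]
  have hf1p : f1 p = g p := by simp only [hf1, if_neg hpv]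
  have : f1 p = f1 v := by
    rw [hf1p, ← hf2p, hpu]
    simp only [hf1, if_pos rfl]
  exact hpv (hinj1 hp hv this)

/-- 1 is a complementarity eigenvalue. -/
lemma one_mem_compSpec (E : V → V → Prop) [Nonempty V] (hout : ∀ v : V, ∃ u, E v u) :
    (1 : ℝ) ∈ compSpec (adjMat E) := by
  obtain ⟨s, hsne, hs⟩ := exists_cycle_set E hout
  have hS : SuppEig E (↑s) 1 (fun v => if v ∈ s then 1 else 0) := by
    refine ⟨fun v => ?_, fun v => ?_, fun v hv => ?_⟩
    · by_cases h : v ∈ s <;> simp [h]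
    · by_cases h : v ∈ s <;> simp [h]
    · simp only [Finset.coe_sort_coe, Finset.mem_coe] at hv
      obtain ⟨u, hu, hEu, huniq⟩ := hs v hv
      rw [mulVec_adj]
      have : ∀ w ∈ Finset.univ, w ≠ u → (if E v w then (if w ∈ s then (1:ℝ) else 0) else 0) = 0 := by
        intro w _ hwu
        by_cases hE : E v w
        · by_cases hws : w ∈ s
          · exact absurd (huniq w hws hE) hwu
          · simp [hE, hws]
        · simp [hE]
      rw [Finset.sum_eq_single u this (fun h => absurd (Finset.mem_univ u) h)]
      simp [hEu, hu, Finset.mem_coe.2 hv, hv]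
  exact suppEig_mem_compSpec hS ⟨hsne.choose, by simpa using hsne.choose_spec⟩

/-- An eigenvalue on a support where every vertex has an out-neighbour is ≥ 1. -/
lemma suppEig_ge_one {E : V → V → Prop} {S : Set V} {lam : ℝ} {x : V → ℝ}
    (h : SuppEig E S lam x) (hne : S.Nonempty)
    (hout : ∀ v ∈ S, ∃ u ∈ S, E v u) : 1 ≤ lam := by
  classical
  obtain ⟨hx0, hsupp, heig⟩ := h
  have hSfin : (Finset.univ.filter (fun v => v ∈ S)).Nonempty := by
    obtain ⟨v, hv⟩ := hne
    exact ⟨v, by simp [hv]⟩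
  obtain ⟨v1, hv1mem, hv1⟩ := Finset.exists_min_image _ x hSfin
  simp only [Finset.mem_filter, Finset.mem_univ, true_and] at hv1mem
  obtain ⟨u0, hu0S, hEu0⟩ := hout v1 hv1mem
  have hkey : x u0 ≤ lam * x v1 := by
    rw [← heig v1 hv1mem, mulVec_adj]
    have h1 : (if E v1 u0 then x u0 else 0) = x u0 := by rw [if_pos hEu0]
    rw [← h1]
    exact Finset.single_le_sum (f := fun w => if E v1 w then x w else 0)
      (fun w _ => ite_term_nonneg (hx0 w)) (Finset.mem_univ u0)
  have hmin : x v1 ≤ x u0 := hv1 u0 (by simp [hu0S])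
  have hpos : 0 < x v1 := (hsupp v1).2 hv1mem
  nlinarith

omit [Fintype V] in
/-- ReachIn closure helper. -/
lemma reachIn_closed {E : V → V → Prop} {S : Set V} {M : Set V} {v u : V}
    (h : ReachIn E S v u) (hv : v ∈ M)
    (hstep : ∀ a ∈ M, ∀ b ∈ S, E a b → b ∈ M) : u ∈ M := by
  induction h with
  | refl => exact hv
  | @tail b c hab hbc ih => exact hstep b ih c hbc.2.1 hbc.2.2

/-- If additionally some vertex of the support has two out-neighbours in it,
and the induced digraph is strongly connected, then lam > 1. -/
lemma suppEig_gt_one {E : V → V → Prop} {S : Set V} {lam : ℝ} {x : V → ℝ}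
    (h : SuppEig E S lam x) (hne : S.Nonempty)
    (hout : ∀ v ∈ S, ∃ u ∈ S, E v u)
    (hsc : ∀ v ∈ S, ∀ u ∈ S, ReachIn E S v u)
    {v0 u1 u2 : V} (hv0 : v0 ∈ S) (hu1 : u1 ∈ S) (hu2 : u2 ∈ S)
    (hne12 : u1 ≠ u2) (hE1 : E v0 u1) (hE2 : E v0 u2) : 1 < lam := by
  classical
  rcases lt_or_eq_of_le (suppEig_ge_one h hne hout) with hlt | heq
  · exact hlt
  exfalso
  obtain ⟨hx0, hsupp, heig⟩ := h
  have hSfin : (Finset.univ.filter (fun v => v ∈ S)).Nonempty := by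
    obtain ⟨v, hv⟩ := hne
    exact ⟨v, by simp [hv]⟩
  obtain ⟨v1, hv1mem, hv1⟩ := Finset.exists_min_image _ x hSfin
  simp only [Finset.mem_filter, Finset.mem_univ, true_and] at hv1mem
  set m := x v1 with hm
  have hmpos : 0 < m := (hsupp v1).2 hv1mem
  have hminS : ∀ u ∈ S, m ≤ x u := fun u hu => hv1 u (by simp [hu])
  set M : Set V := {v | v ∈ S ∧ x v = m} with hM
  -- closure of M under out-steps in S
  have hstep : ∀ a ∈ M, ∀ b ∈ S, E a b → b ∈ M := by
    rintro a ⟨haS, ham⟩ b hbS hEab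
    refine ⟨hbS, ?_⟩
    by_contra hxb
    have hxbgt : m < x b := lt_of_le_of_ne (hminS b hbS) (Ne.symm hxb)
    have hsum : x a = ∑ u, if E a u then x u else 0 := by
      have := heig a haS
      rw [mulVec_adj] at this
      rw [← heq] at this
      linarith [this]
    have hge : x b ≤ ∑ u, if E a u then x u else 0 := by
      have h1 : (if E a b then x b else 0) = x b := by rw [if_pos hEab]
      rw [← h1]
      exact Finset.single_le_sum (f := fun w => if E a w then x w else 0)
        (fun w _ => ite_term_nonneg (hx0 w)) (Finset.mem_univ b)
    rw [← hsum, ham] at hge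
    linarith
  have hv1M : v1 ∈ M := ⟨hv1mem, rfl⟩
  have hv0M : v0 ∈ M := reachIn_closed (hsc v1 hv1mem v0 hv0) hv1M hstep
  -- but v0 has two out-neighbours in S, each with x ≥ m > 0
  have hsum : x v0 = ∑ u, if E v0 u then x u else 0 := by
    have := heig v0 hv0
    rw [mulVec_adj] at this
    rw [← heq] at this
    linarith [this]
  have hge : x u1 + x u2 ≤ ∑ u, if E v0 u then x u else 0 := by
    have hpair : ∑ u ∈ ({u1, u2} : Finset V), (if E v0 u then x u else 0) = x u1 + x u2 := by
      rw [Finset.sum_pair hne12, if_pos hE1, if_pos hE2]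
    rw [← hpair]
    exact Finset.sum_le_sum_of_subset_of_nonneg (Finset.subset_univ _)
      (fun w _ _ => ite_term_nonneg (hx0 w))
  rw [← hsum, hv0M.2] at hge
  have h1 := hminS u1 hu1
  have h2 := hminS u2 hu2
  linarith

/-- Strict comparison on a proper subset. -/
lemma suppEig_lt {E : V → V → Prop} {S S' : Set V} {lam lam' : ℝ} {x x' : V → ℝ}
    (h : SuppEig E S lam x) (h' : SuppEig E S' lam' x')
    (hsub : S' ⊆ S) (hne' : S'.Nonempty) {w0 : V} (hw0S : w0 ∈ S) (hw0 : w0 ∉ S')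
    (hsc : ∀ v ∈ S, ∀ u ∈ S, ReachIn E S v u) : lam' < lam := by
  classical
  obtain ⟨hx0, hsupp, heig⟩ := h
  obtain ⟨hx0', hsupp', heig'⟩ := h'
  have hS'fin : (Finset.univ.filter (fun v => v ∈ S')).Nonempty := by
    obtain ⟨v, hv⟩ := hne'
    exact ⟨v, by simp [hv]⟩
  obtain ⟨v1, hv1mem, hv1⟩ := Finset.exists_max_image _ (fun v => x' v / x v) hS'fin
  simp only [Finset.mem_filter, Finset.mem_univ, true_and] at hv1mem
  set t := x' v1 / x v1 with htdef
  have hxv1 : 0 < x v1 := (hsupp v1).2 (hsub hv1mem)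
  have htpos : 0 < t := div_pos ((hsupp' v1).2 hv1mem) hxv1
  have htmax : ∀ u ∈ S', x' u ≤ t * x u := by
    intro u hu
    have hxu : 0 < x u := (hsupp u).2 (hsub hu)
    have := hv1 u (by simp [hu])
    rw [div_le_div_iff₀ hxu hxv1] at this
    rw [htdef, div_mul_eq_mul_div, le_div_iff₀ hxv1]
    nlinarith [this]
  have hbound : ∀ u : V, x' u ≤ t * x u := by
    intro u
    by_cases hu : u ∈ S'
    · exact htmax u hu
    · rw [suppEig_x_eq_zero ⟨hx0', hsupp', heig'⟩ hu]
      exact mul_nonneg htpos.le (hx0 u)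
  -- pointwise comparison of sums at any v ∈ S'
  have hsums : ∀ v ∈ S', lam' * x' v ≤ t * (lam * x v) := by
    intro v hv
    have e1 : lam' * x' v = ∑ u, if E v u then x' u else 0 := by
      rw [← heig' v hv, mulVec_adj]
    have e2 : t * (lam * x v) = ∑ u, if E v u then t * x u else 0 := by
      rw [← heig v (hsub hv), mulVec_adj, Finset.mul_sum]
      exact Finset.sum_congr rfl fun u _ => by by_cases hE : E v u <;> simp [hE]
    rw [e1, e2]
    exact Finset.sum_le_sum fun u _ => by
      by_cases hE : E v u
      · simp only [hE, if_pos]; exact hbound u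
      · simp [hE]
  -- first: lam' ≤ lam
  have hle : lam' ≤ lam := by
    have h1 := hsums v1 hv1mem
    have h2 : x' v1 = t * x v1 := by
      rw [htdef, div_mul_cancel₀ _ (ne_of_gt hxv1)]
    rw [h2] at h1
    nlinarith [mul_pos htpos hxv1]
  rcases lt_or_eq_of_le hle with hlt | heqq
  · exact hlt
  exfalso
  -- equality propagation
  set M : Set V := {v | v ∈ S' ∧ x' v = t * x v} with hMdef
  have hstep : ∀ a ∈ M, ∀ b ∈ S, E a b → b ∈ M := by
    rintro a ⟨haS', ham⟩ b hbS hEab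
    -- equality of the sums at a
    have e1 : lam' * x' a = ∑ u, if E a u then x' u else 0 := by
      rw [← heig' a haS', mulVec_adj]
    have e2 : t * (lam * x a) = ∑ u, if E a u then t * x u else 0 := by
      rw [← heig a (hsub haS'), mulVec_adj, Finset.mul_sum]
      exact Finset.sum_congr rfl fun u _ => by by_cases hE : E a u <;> simp [hE]
    have hEq : (∑ u, if E a u then x' u else 0) = ∑ u, if E a u then t * x u else 0 := by
      rw [← e1, ← e2, ham, heqq]
      ring
    have hsle : ∀ u ∈ Finset.univ, (if E a u then x' u else 0) ≤ (if E a u then t * x u else 0) := by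
      intro u _
      by_cases hE : E a u
      · simp only [hE, if_pos]; exact hbound u
      · simp [hE]
    have hterm : ∀ u, (if E a u then x' u else 0) = (if E a u then t * x u else 0) :=
      fun u => (Finset.sum_eq_sum_iff_of_le hsle).1 hEq u (Finset.mem_univ u)
    have hxb : x' b = t * x b := by
      have := hterm b
      rw [if_pos hEab, if_pos hEab] at this
      exact this
    have hbS' : b ∈ S' := by
      by_contra hbS'
      have : x' b = 0 := suppEig_x_eq_zero ⟨hx0', hsupp', heig'⟩ hbS'
      rw [this] at hxb
      have : 0 < t * x b := mul_pos htpos ((hsupp b).2 hbS)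
      linarith
    exact ⟨hbS', hxb⟩
  have hv1M : v1 ∈ M := ⟨hv1mem, by rw [htdef, div_mul_cancel₀ _ (ne_of_gt hxv1)]⟩
  have hw0M : w0 ∈ M := reachIn_closed (hsc v1 (hsub hv1mem) w0 hw0S) hv1M hstep
  exact hw0 hw0M.1

end Digraph2

section Theta
variable {V : Type*}

lemma pathReach_from_zero {E : V → V → Prop} {T : Set V} {m : ℕ} (f : Fin (m + 2) → V)
    (harc : ∀ i : Fin (m + 1), E (f i.castSucc) (f i.succ)) (hrange : ∀ i, f i ∈ T) :
    ∀ j, ReachIn E T (f 0) (f j) := by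
  intro j
  induction j using Fin.induction with
  | zero => exact Relation.ReflTransGen.refl
  | succ i ih =>
      exact Relation.ReflTransGen.tail ih ⟨hrange i.castSucc, hrange i.succ, harc i⟩

lemma pathReach_to_last {E : V → V → Prop} {T : Set V} {m : ℕ} (f : Fin (m + 2) → V)
    (harc : ∀ i : Fin (m + 1), E (f i.castSucc) (f i.succ)) (hrange : ∀ i, f i ∈ T) :
    ∀ j, ReachIn E T (f j) (f (Fin.last (m + 1))) := by
  intro j
  induction j using Fin.reverseInduction with
  | last => exact Relation.ReflTransGen.refl
  | cast i ih =>
      exact Relation.ReflTransGen.head ⟨hrange i.castSucc, hrange i.succ, harc i⟩ ih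

end Theta


/-- a strongly connected digraph with exactly three complementarity
eigenvalues containing a `θ(a,b,c)`-subdigraph has exactly `a + b + c + 2` vertices. -/
theorem stmt18 {V : Type*} [Fintype V] (E : V → V → Prop) (a b c : ℕ)
    (hab : a ≤ b) (hb : 0 < b) (hloop : ∀ v, ¬ E v v) (hsc : StronglyConnected E)
    (h3 : (compSpec (adjMat E)).ncard = 3) (hsub : ThetaSub E a b c) :
    Fintype.card V = a + b + c + 2 := by
  classical
  obtain ⟨P, Q, R, hPinj, hQinj, hRinj, hPQ0, hQR0, hPl, hQl, hPQ, hPR, hQR, hPe, hQe, hRe⟩ :=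
    hsub
  haveI : Nonempty V := ⟨P 0⟩
  set T : Set V := (Set.range P ∪ Set.range Q) ∪ Set.range R with hT
  have hPT : ∀ i, P i ∈ T := fun i => Or.inl (Or.inl ⟨i, rfl⟩)
  have hQT : ∀ i, Q i ∈ T := fun i => Or.inl (Or.inr ⟨i, rfl⟩)
  have hRT : ∀ i, R i ∈ T := fun i => Or.inr ⟨i, rfl⟩
  have hTne : T.Nonempty := ⟨P 0, hPT 0⟩
  -- basic arcs
  have hE1 : E (P 0) (P 1) := by
    have := hPe 0
    rwa [Fin.castSucc_zero, Fin.succ_zero_eq_one] at this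
  have hE2 : E (P 0) (Q 1) := by
    have := hQe 0
    rwa [Fin.castSucc_zero, Fin.succ_zero_eq_one, ← hPQ0] at this
  have hne12 : P 1 ≠ Q 1 := by
    intro h
    rcases hPQ 1 1 h with ⟨h1, h2⟩ | ⟨h1, h2⟩
    · have := congrArg Fin.val h1
      simp [Fin.val_one] at this
    · have := congrArg Fin.val h2
      rw [Fin.val_last, Fin.val_one] at this
      omega
  have hP01 : P 0 ≠ P 1 := by
    intro h
    have := congrArg Fin.val (hPinj h)
    simp at this
  -- connectivity of T
  have hreachPz : ∀ j, ReachIn E T (P 0) (P j) := pathReach_from_zero P hPe hPT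
  have hreachQz : ∀ j, ReachIn E T (Q 0) (Q j) := pathReach_from_zero Q hQe hQT
  have hreachRz : ∀ j, ReachIn E T (R 0) (R j) := pathReach_from_zero R hRe hRT
  have hreachPl : ∀ j, ReachIn E T (P j) (P (Fin.last (a + 1))) := pathReach_to_last P hPe hPT
  have hreachQl : ∀ j, ReachIn E T (Q j) (Q (Fin.last (b + 1))) := pathReach_to_last Q hQe hQT
  have hreachRl : ∀ j, ReachIn E T (R j) (R (Fin.last (c + 1))) := pathReach_to_last R hRe hRT
  have hto_w : ∀ p ∈ T, ReachIn E T p (Q (Fin.last (b + 1))) := by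
    rintro p ((⟨i, rfl⟩ | ⟨i, rfl⟩) | ⟨i, rfl⟩)
    · rw [← hPl]; exact hreachPl i
    · exact hreachQl i
    · refine Relation.ReflTransGen.trans (hreachRl i) ?_
      rw [← hQR0]
      exact hreachQl 0
  have hfrom_w : ∀ q ∈ T, ReachIn E T (Q (Fin.last (b + 1))) q := by
    have hwR0 : Q (Fin.last (b + 1)) = R 0 := hQl
    rintro q ((⟨i, rfl⟩ | ⟨i, rfl⟩) | ⟨i, rfl⟩)
    · rw [hwR0]
      refine Relation.ReflTransGen.trans (hreachRz (Fin.last (c + 1))) ?_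
      rw [← hQR0, ← hPQ0]
      exact hreachPz i
    · rw [hwR0]
      refine Relation.ReflTransGen.trans (hreachRz (Fin.last (c + 1))) ?_
      rw [← hQR0]
      exact hreachQz i
    · rw [hwR0]; exact hreachRz i
  have hTsc : ∀ p ∈ T, ∀ q ∈ T, ReachIn E T p q := fun p hp q hq =>
    Relation.ReflTransGen.trans (hto_w p hp) (hfrom_w q hq)
  -- cardinality of T
  have hncardT : T.ncard = a + b + c + 2 := by
    set g : (Fin (a + 2) ⊕ (Fin b ⊕ Fin c)) → V :=
      Sum.elim P (Sum.elim (fun j => Q ⟨j.1 + 1, by omega⟩) (fun k => R ⟨k.1 + 1, by omega⟩))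
      with hg
    have hginj : Function.Injective g := by
      rintro (i | j | k) (i' | j' | k') heq <;> simp only [hg, Sum.elim_inl, Sum.elim_inr] at heq
      · rw [hPinj heq]
      · rcases hPQ i ⟨j'.1 + 1, by omega⟩ heq with ⟨h1, h2⟩ | ⟨h1, h2⟩
        · have := congrArg Fin.val h2; simp at this
        · have := congrArg Fin.val h2; rw [Fin.val_last] at this
          simp at this; omega
      · rcases hPR i ⟨k'.1 + 1, by omega⟩ heq with ⟨h1, h2⟩ | ⟨h1, h2⟩
        · have := congrArg Fin.val h2; rw [Fin.val_last] at this
          simp at this; omega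
        · have := congrArg Fin.val h2; simp at this
      · rcases hPQ i' ⟨j.1 + 1, by omega⟩ heq.symm with ⟨h1, h2⟩ | ⟨h1, h2⟩
        · have := congrArg Fin.val h2; simp at this
        · have := congrArg Fin.val h2; rw [Fin.val_last] at this
          simp at this; omega
      · have := congrArg Fin.val (hQinj heq)
        simp at this
        exact congrArg Sum.inr (congrArg Sum.inl (Fin.ext this))
      · rcases hQR ⟨j.1 + 1, by omega⟩ ⟨k'.1 + 1, by omega⟩ heq with ⟨h1, h2⟩ | ⟨h1, h2⟩
        · have := congrArg Fin.val h1; simp at this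
        · have := congrArg Fin.val h1; rw [Fin.val_last] at this
          simp at this; omega
      · rcases hPR i' ⟨k.1 + 1, by omega⟩ heq.symm with ⟨h1, h2⟩ | ⟨h1, h2⟩
        · have := congrArg Fin.val h2; rw [Fin.val_last] at this
          simp at this; omega
        · have := congrArg Fin.val h2; simp at this
      · rcases hQR ⟨j'.1 + 1, by omega⟩ ⟨k.1 + 1, by omega⟩ heq.symm with ⟨h1, h2⟩ | ⟨h1, h2⟩
        · have := congrArg Fin.val h1; simp at this
        · have := congrArg Fin.val h1; rw [Fin.val_last] at this
          simp at this; omega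
      · have := congrArg Fin.val (hRinj heq)
        simp at this
        exact congrArg Sum.inr (congrArg Sum.inr (Fin.ext this))
    have hrange : Set.range g = T := by
      apply Set.Subset.antisymm
      · rintro x ⟨(i | j | k), rfl⟩
        · exact hPT i
        · exact hQT _
        · exact hRT _
      · rintro x ((⟨i, rfl⟩ | ⟨j, rfl⟩) | ⟨k, rfl⟩)
        · exact ⟨Sum.inl i, rfl⟩
        · by_cases hj0 : j.1 = 0
          · refine ⟨Sum.inl 0, ?_⟩
            simp only [hg, Sum.elim_inl]
            rw [hPQ0]
            congr 1
            exact Fin.ext (by simp [hj0.symm]; exact Nat.le_of_lt_succ j.isLt)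
          · by_cases hjl : j.1 = b + 1
            · refine ⟨Sum.inl (Fin.last (a + 1)), ?_⟩
              simp only [hg, Sum.elim_inl]
              rw [hPl]
              congr 1
              exact Fin.ext (by rw [Fin.val_last]; omega)
            · refine ⟨Sum.inr (Sum.inl ⟨j.1 - 1, by omega⟩), ?_⟩
              simp only [hg, Sum.elim_inr, Sum.elim_inl]
              congr 1
              exact Fin.ext (by simp; omega)
        · by_cases hk0 : k.1 = 0
          · refine ⟨Sum.inl (Fin.last (a + 1)), ?_⟩
            simp only [hg, Sum.elim_inl]
            rw [hPl, hQl]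
            congr 1
            exact Fin.ext (by simp [hk0.symm]; exact Nat.le_of_lt_succ k.isLt)
          · by_cases hkl : k.1 = c + 1
            · refine ⟨Sum.inl 0, ?_⟩
              simp only [hg, Sum.elim_inl]
              rw [hPQ0, hQR0]
              congr 1
              exact Fin.ext (by rw [Fin.val_last]; omega)
            · refine ⟨Sum.inr (Sum.inr ⟨k.1 - 1, by omega⟩), ?_⟩
              simp only [hg, Sum.elim_inr]
              congr 1
              exact Fin.ext (by simp; omega)
    rw [← hrange, ← Set.image_univ, Set.ncard_image_of_injective _ hginj, Set.ncard_univ]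
    simp only [Nat.card_eq_fintype_card, Fintype.card_sum, Fintype.card_fin]
    omega
  -- T is everything
  have hTuniv : T = Set.univ := by
    by_contra hne
    obtain ⟨u0, hu0⟩ := (Set.ne_univ_iff_exists_notMem T).1 hne
    -- global out-neighbours
    have hout : ∀ v : V, ∃ u, E v u := by
      intro v
      by_cases hv : v = P 0
      · subst hv; exact ⟨P 1, hE1⟩
      · rcases (hsc v (P 0)).cases_head with heq | ⟨u, hu, _⟩
        · exact absurd heq hv
        · exact ⟨u, hu⟩
    -- out-neighbours within T
    have hToutd : ∀ v ∈ T, ∃ u ∈ T, E v u := by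
      intro v hv
      by_cases hvP : v = P 0
      · exact ⟨P 1, hPT 1, hvP ▸ hE1⟩
      · rcases (hTsc v hv (P 0) (hPT 0)).cases_head with heq | ⟨u, ⟨_, huT, hEu⟩, _⟩
        · exact absurd heq hvP
        · exact ⟨u, huT, hEu⟩
    have huniv : ∀ p ∈ (Set.univ : Set V), ∀ q ∈ (Set.univ : Set V), ReachIn E Set.univ p q :=
      fun p _ q _ => Relation.ReflTransGen.mono (r := E)
        (p := fun a b => a ∈ Set.univ ∧ b ∈ Set.univ ∧ E a b)
        (fun a b h => ⟨Set.mem_univ a, Set.mem_univ b, h⟩) p q (hsc p q)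
    -- the four eigenvalues
    have h0mem : (0 : ℝ) ∈ compSpec (adjMat E) := zero_mem_compSpec E hloop (P 0)
    have h1mem : (1 : ℝ) ∈ compSpec (adjMat E) := one_mem_compSpec E hout
    obtain ⟨lamT, xT, _, hSET⟩ := exists_suppEig E T hTne hTsc
    obtain ⟨lamV, xV, _, hSEV⟩ := exists_suppEig E Set.univ ⟨P 0, Set.mem_univ _⟩ huniv
    have hTmem : lamT ∈ compSpec (adjMat E) := suppEig_mem_compSpec hSET hTne
    have hVmem : lamV ∈ compSpec (adjMat E) :=
      suppEig_mem_compSpec hSEV ⟨P 0, Set.mem_univ _⟩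
    have hgt1 : 1 < lamT :=
      suppEig_gt_one hSET hTne hToutd hTsc (hPT 0) (hPT 1) (hQT 1) hne12 hE1 hE2
    have hltV : lamT < lamV :=
      suppEig_lt hSEV hSET (Set.subset_univ T) hTne (Set.mem_univ u0) hu0 huniv
    -- four distinct elements
    have hss : ({0, 1, lamT, lamV} : Set ℝ) ⊆ compSpec (adjMat E) := by
      rintro z (rfl | rfl | rfl | rfl)
      · exact h0mem
      · exact h1mem
      · exact hTmem
      · exact hVmem
    have hfin : (compSpec (adjMat E)).Finite :=
      Set.finite_of_ncard_ne_zero (by rw [h3]; norm_num)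
    have d01 : (0:ℝ) ≠ 1 := by norm_num
    have d0T : (0:ℝ) ≠ lamT := by linarith
    have d0V : (0:ℝ) ≠ lamV := by linarith
    have d1T : (1:ℝ) ≠ lamT := by linarith
    have d1V : (1:ℝ) ≠ lamV := by linarith
    have dTV : lamT ≠ lamV := by linarith
    have h4 : ({0, 1, lamT, lamV} : Set ℝ).ncard = 4 := by
      have e1 : ((0:ℝ)) ∉ ({1, lamT, lamV} : Set ℝ) := by
        simp only [Set.mem_insert_iff, Set.mem_singleton_iff]
        push_neg
        exact ⟨d01, d0T, d0V⟩
      have e2 : ((1:ℝ)) ∉ ({lamT, lamV} : Set ℝ) := by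
        simp only [Set.mem_insert_iff, Set.mem_singleton_iff]
        push_neg
        exact ⟨d1T, d1V⟩
      rw [Set.ncard_insert_of_notMem e1 (((Set.finite_singleton lamV).insert lamT).insert 1),
        Set.ncard_insert_of_notMem e2 ((Set.finite_singleton lamV).insert lamT),
        Set.ncard_pair dTV]
    have : (4 : ℕ) ≤ 3 := by
      calc (4 : ℕ) = ({0, 1, lamT, lamV} : Set ℝ).ncard := h4.symm
        _ ≤ (compSpec (adjMat E)).ncard := Set.ncard_le_ncard hss hfin
        _ = 3 := h3
    omega
  calc Fintype.card V = Nat.card V := Nat.card_eq_fintype_card.symm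
    _ = (Set.univ : Set V).ncard := (Set.ncard_univ V).symm
    _ = T.ncard := by rw [hTuniv]
    _ = a + b + c + 2 := hncardT
end
end

section
/- Let D be a digraph obtained from a directed cycle C⃗_n by adding k ≥ 1 chords (x_i, y_i), i = 1,…,k, with 1 < y_1 < x_1 < y_2 < x_2 < ⋯ < y_k < x_k ≤ n (vertices of the cycle labeled 1,…,n along the cycle direction). Then the induced strongly connected proper subdigraphs of D are exactly the isolated vertices and the k directed cycles induced by the vertex intervals [y_i, x_i]; consequently D has exactly three complementarity eigenvalues {0, 1, ρ(D)}. -/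
open Matrix
open scoped Classical

noncomputable section

/-- The directed cycle `0 → 1 → ⋯ → n-1 → 0` together with the chords `(x i, y i)`. -/
def cyclePlusChords (n k : ℕ) (x y : Fin k → Fin n) : Fin n → Fin n → Prop :=
  fun u v => (u.val + 1 = v.val) ∨ (u.val = n - 1 ∧ v.val = 0) ∨ (∃ i, u = x i ∧ v = y i)

/-! ### Auxiliary spectral lemmas -/

lemma aux_mem_spectrum_of_eigen {N : Type*} [Fintype N]
    (M : Matrix N N ℂ) (μ : ℂ) (w : N → ℂ) (hw : w ≠ 0)
    (h : M.mulVec w = μ • w) : μ ∈ spectrum ℂ M := by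
  rw [spectrum.mem_iff]
  intro hunit
  have h0 : ((algebraMap ℂ (Matrix N N ℂ)) μ - M).mulVec w = 0 := by
    rw [Matrix.sub_mulVec, Algebra.algebraMap_eq_smul_one, Matrix.smul_mulVec,
      Matrix.one_mulVec, h, sub_self]
  obtain ⟨u, hu⟩ := hunit
  apply hw
  have h2 : ((u⁻¹ : (Matrix N N ℂ)ˣ) : Matrix N N ℂ).mulVec
      (((u : (Matrix N N ℂ)ˣ) : Matrix N N ℂ).mulVec w) = 0 := by
    rw [hu, h0, Matrix.mulVec_zero]
  rwa [Matrix.mulVec_mulVec, Units.inv_mul, Matrix.one_mulVec] at h2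

lemma aux_exists_eigen_of_mem_spectrum {N : Type*} [Fintype N]
    (M : Matrix N N ℂ) (μ : ℂ) (h : μ ∈ spectrum ℂ M) :
    ∃ w : N → ℂ, w ≠ 0 ∧ M.mulVec w = μ • w := by
  rw [spectrum.mem_iff] at h
  have hdet : ((algebraMap ℂ (Matrix N N ℂ)) μ - M).det = 0 := by
    by_contra hd
    exact h ((Matrix.isUnit_iff_isUnit_det _).2 (isUnit_iff_ne_zero.2 hd))
  obtain ⟨w, hw, hw0⟩ := Matrix.exists_mulVec_eq_zero_iff.2 hdet
  refine ⟨w, hw, ?_⟩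
  rw [Matrix.sub_mulVec, Algebra.algebraMap_eq_smul_one, Matrix.smul_mulVec,
    Matrix.one_mulVec, sub_eq_zero] at hw0
  exact hw0.symm

lemma aux_map_mulVec_coe {N : Type*} [Fintype N] (A : Matrix N N ℝ) (v : N → ℝ) (i : N) :
    (A.map (fun x => (x : ℂ))).mulVec (fun j => (v j : ℂ)) i = ((A.mulVec v i : ℝ) : ℂ) := by
  simp only [Matrix.mulVec, dotProduct, Matrix.map_apply]
  push_cast
  rfl

/-- KEY: a positive eigenvector pins down the spectral radius. -/
lemma aux_matSpecRad_eq_of_pos_eigen {N : Type*} [Fintype N] [Nonempty N]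
    (A : Matrix N N ℝ) (hA : ∀ i j, 0 ≤ A i j) (lam : ℝ) (hl : 0 ≤ lam)
    (v : N → ℝ) (hv : ∀ i, 0 < v i) (heig : A.mulVec v = lam • v) :
    matSpecRad A = lam := by
  apply IsGreatest.csSup_eq
  constructor
  · refine ⟨(lam : ℂ), ?_, ?_⟩
    · apply aux_mem_spectrum_of_eigen _ _ (fun j => (v j : ℂ))
      · intro h0
        have := congrFun h0 (Classical.arbitrary N)
        simp only [Pi.zero_apply, Complex.ofReal_eq_zero] at this
        exact (hv _).ne' this
      · funext i
        rw [aux_map_mulVec_coe, heig]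
        simp
    · simp [Complex.norm_real, abs_of_nonneg hl]
  · rintro r ⟨μ, hμ, rfl⟩
    obtain ⟨w, hw, hwe⟩ := aux_exists_eigen_of_mem_spectrum _ _ hμ
    obtain ⟨i0, -, hi0⟩ := Finset.exists_max_image Finset.univ
      (fun i => ‖w i‖ / v i) ⟨Classical.arbitrary N, Finset.mem_univ _⟩
    set c : ℝ := ‖w i0‖ / v i0 with hc
    have hbound : ∀ j, ‖w j‖ ≤ c * v j := by
      intro j
      have h := hi0 j (Finset.mem_univ _)
      rw [div_le_div_iff₀ (hv j) (hv i0)] at h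
      rw [hc, div_mul_eq_mul_div, le_div_iff₀ (hv i0)]
      linarith
    have hwi0pos : 0 < ‖w i0‖ := by
      obtain ⟨j, hj⟩ : ∃ j, w j ≠ 0 := Function.ne_iff.1 hw
      have h1 : 0 < ‖w j‖ / v j :=
        div_pos (by simpa using hj) (hv j)
      have h2 := hi0 j (Finset.mem_univ _)
      have h3 : 0 < c := lt_of_lt_of_le h1 h2
      rw [hc] at h3
      rcases div_pos_iff.1 h3 with ⟨h4, -⟩ | ⟨-, h5⟩
      · exact h4
      · exact absurd (hv i0) (not_lt.2 h5.le)
    have hchain : ‖μ‖ * ‖w i0‖ ≤ lam * ‖w i0‖ := by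
      calc ‖μ‖ * ‖w i0‖
          = ‖μ * w i0‖ := (norm_mul _ _).symm
        _ = ‖((A.map (fun x => (x:ℂ))).mulVec w) i0‖ := by rw [hwe]; simp
        _ = ‖∑ j, (A i0 j : ℂ) * w j‖ := by
              simp [Matrix.mulVec, dotProduct, Matrix.map_apply]
        _ ≤ ∑ j, ‖(A i0 j : ℂ) * w j‖ := by
              exact norm_sum_le _ _
        _ = ∑ j, A i0 j * ‖w j‖ := by
              apply Finset.sum_congr rfl; intro j _
              rw [norm_mul, Complex.norm_real, Real.norm_of_nonneg (hA i0 j)]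
        _ ≤ ∑ j, A i0 j * (c * v j) := by
              apply Finset.sum_le_sum; intro j _
              exact mul_le_mul_of_nonneg_left (hbound j) (hA i0 j)
        _ = c * (A.mulVec v i0) := by
              simp [Matrix.mulVec, dotProduct, Finset.mul_sum]; ring_nf
              exact Finset.sum_congr rfl fun j _ => by ring
        _ = c * (lam * v i0) := by rw [heig]; simp
        _ = lam * (c * v i0) := by ring
        _ = lam * ‖w i0‖ := by
              rw [hc, div_mul_cancel₀]
              exact (hv i0).ne'
    exact le_of_mul_le_mul_right hchain hwi0pos
/-! ### Combinatorial lemmas about `cyclePlusChords` -/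

section Comb

variable {n k : ℕ} {x y : Fin k → Fin n}

lemma aux_val_add_one_of_lt {n : ℕ} [NeZero n] (hn : 2 ≤ n) {u : Fin n} (h : u.val < n - 1) :
    (u + 1).val = u.val + 1 := by
  have h1 : (1 : Fin n).val = 1 := by
    rw [Fin.val_one']
    exact Nat.mod_eq_of_lt (by omega)
  rw [Fin.val_add, h1]
  exact Nat.mod_eq_of_lt (by omega)

lemma aux_val_add_one_last {n : ℕ} [NeZero n] (hn : 2 ≤ n) {u : Fin n} (h : u.val = n - 1) :
    (u + 1).val = 0 := by
  have h1 : (1 : Fin n).val = 1 := by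
    rw [Fin.val_one']
    exact Nat.mod_eq_of_lt (by omega)
  rw [Fin.val_add, h1, h]
  have : n - 1 + 1 = n := by omega
  rw [this, Nat.mod_self]

lemma aux_arc_iff [NeZero n] (hn : 3 ≤ n) (u w : Fin n) :
    cyclePlusChords n k x y u w ↔ (w = u + 1 ∨ ∃ m, u = x m ∧ w = y m) := by
  constructor
  · rintro (h1 | ⟨h2a, h2b⟩ | h3)
    · left
      have hu : u.val < n - 1 := by have := w.isLt; omega
      exact Fin.ext (by rw [aux_val_add_one_of_lt (by omega) hu, h1])
    · left
      exact Fin.ext (by rw [aux_val_add_one_last (by omega) h2a, h2b])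
    · right; exact h3
  · rintro (h | h)
    · rw [h]
      rcases Nat.lt_or_ge u.val (n - 1) with hu | hu
      · exact Or.inl (aux_val_add_one_of_lt (by omega) hu).symm
      · have hu' : u.val = n - 1 := by have := u.isLt; omega
        exact Or.inr (Or.inl ⟨hu', aux_val_add_one_last (by omega) hu'⟩)
    · exact Or.inr (Or.inr h)

lemma aux_chord_unique (hyx : ∀ i, (y i).val < (x i).val)
    (hinter : ∀ i j : Fin k, (i : ℕ) < (j : ℕ) → (x i).val < (y j).val)
    {l m : Fin k} (h1 : (y m).val ≤ (x l).val) (h2 : (x l).val ≤ (x m).val) : l = m := by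
  rcases lt_trichotomy (l : ℕ) (m : ℕ) with h | h | h
  · exact absurd (hinter l m h) (by omega)
  · exact Fin.ext h
  · have := hinter m l h
    have := hyx l
    omega

open Fin.NatCast in
lemma aux_succ_closed_univ [NeZero n] (hn : 3 ≤ n) (T : Set (Fin n)) (a : Fin n) (ha : a ∈ T)
    (hcl : ∀ u ∈ T, u + 1 ∈ T) : T = Set.univ := by
  have key : ∀ j : ℕ, a + (j : Fin n) ∈ T := by
    intro j
    induction j with
    | zero => simpa using ha
    | succ j ih =>
        have hcast : ((j + 1 : ℕ) : Fin n) = (j : Fin n) + 1 := by push_cast; ring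
        rw [hcast, ← add_assoc]
        exact hcl _ ih
  ext v
  simp only [Set.mem_univ, iff_true]
  have := key (v - a).val
  rwa [Fin.cast_val_eq_self, add_comm, sub_add_cancel] at this

/-- The gap lemma: a nonempty proper subset in which every vertex has an
out-neighbour contains a full chord interval whose head's successor is outside. -/
lemma aux_gap [NeZero n] (hn : 3 ≤ n) (hy : ∀ i, 0 < (y i).val)
    (hyx : ∀ i, (y i).val < (x i).val)
    (hinter : ∀ i j : Fin k, (i : ℕ) < (j : ℕ) → (x i).val < (y j).val)
    (T : Set (Fin n)) (hTne : T.Nonempty) (hTproper : T ≠ Set.univ)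
    (hout : ∀ u ∈ T, ∃ w ∈ T, cyclePlusChords n k x y u w) :
    ∃ m : Fin k, (∀ v : Fin n, (y m).val ≤ v.val → v.val ≤ (x m).val → v ∈ T) ∧
      (x m + 1) ∉ T := by
  have hgapex : ∃ u ∈ T, u + 1 ∉ T := by
    by_contra h
    push_neg at h
    obtain ⟨a, ha⟩ := hTne
    exact hTproper (aux_succ_closed_univ hn T a ha h)
  obtain ⟨u, huT, husucc⟩ := hgapex
  obtain ⟨w, hwT, harc⟩ := hout u huT
  rcases (aux_arc_iff hn u w).1 harc with h | ⟨m, hum, hwy⟩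
  · exact absurd (h ▸ hwT) husucc
  refine ⟨m, ?_, by rwa [← hum]⟩
  have step : ∀ d : ℕ, ∀ v : Fin n, v.val = (y m).val + d → v.val ≤ (x m).val → v ∈ T := by
    intro d
    induction d with
    | zero =>
        intro v hv _
        have : v = y m := Fin.ext (by omega)
        rw [this, ← hwy]; exact hwT
    | succ d ih =>
        intro v hv hvx
        have hplt : (y m).val + d < n := by have := v.isLt; omega
        set p : Fin n := ⟨(y m).val + d, hplt⟩ with hp
        have hpT : p ∈ T := ih p rfl (by simp [hp]; omega)
        obtain ⟨w', hw'T, harc'⟩ := hout p hpT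
        rcases (aux_arc_iff hn p w').1 harc' with h' | ⟨l, hpl, hwy'⟩
        · have hplt2 : p.val < n - 1 := by
            have := (x m).isLt
            simp only [hp]; omega
          have : w' = v := by
            apply Fin.ext
            rw [h', aux_val_add_one_of_lt (by omega) hplt2]
            simp [hp]; omega
          rwa [← this]
        · exfalso
          have hlm : l = m := by
            apply aux_chord_unique hyx hinter (l := l) (m := m)
            · rw [← hpl]; simp [hp]
            · rw [← hpl]; simp [hp]; omega
          rw [hlm] at hpl
          have : p.val = (x m).val := by rw [← hpl]
          simp only [hp] at this
          omega
  intro v hyv hvx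
  exact step (v.val - (y m).val) v (by omega) hvx

end Comb
/-! ### Row expansion of the adjacency matrix, and the Perron vector -/

section RowV

variable {n k : ℕ} {x y : Fin k → Fin n}

lemma aux_x_inj (hyx : ∀ i, (y i).val < (x i).val)
    (hinter : ∀ i j : Fin k, (i : ℕ) < (j : ℕ) → (x i).val < (y j).val) :
    Function.Injective x := by
  intro a b h
  apply aux_chord_unique hyx hinter (l := a) (m := b)
  · rw [h]; exact (hyx b).le
  · rw [h]

lemma aux_row [NeZero n] (hn : 3 ≤ n) (hy : ∀ i, 0 < (y i).val)
    (hyx : ∀ i, (y i).val < (x i).val)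
    (hinter : ∀ i j : Fin k, (i : ℕ) < (j : ℕ) → (x i).val < (y j).val)
    (f : Fin n → ℝ) (i : Fin n) :
    (adjMat (cyclePlusChords n k x y)).mulVec f i
      = f (i + 1) + ∑ m ∈ Finset.univ.filter (fun m => x m = i), f (y m) := by
  have hdisj : ∀ j : Fin n, j = i + 1 → ¬ (∃ m, i = x m ∧ j = y m) := by
    rintro j hj ⟨m, him, hjm⟩
    rcases Nat.lt_or_ge i.val (n - 1) with h | h
    · have h1 : (i + 1).val = i.val + 1 := aux_val_add_one_of_lt (by omega) h
      have h2 : (y m).val < (x m).val := hyx m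
      have h3 : i.val = (x m).val := by rw [him]
      have h4 : j.val = (y m).val := by rw [hjm]
      have h5 : j.val = i.val + 1 := by rw [hj, h1]
      omega
    · have heq : i.val = n - 1 := by have := i.isLt; omega
      have h1 : (i + 1).val = 0 := aux_val_add_one_last (by omega) heq
      have h4 : j.val = (y m).val := by rw [hjm]
      have h5 : j.val = 0 := by rw [hj, h1]
      have := hy m
      omega
  have expand : (adjMat (cyclePlusChords n k x y)).mulVec f i
      = ∑ j, (if cyclePlusChords n k x y i j then f j else 0) := by
    simp [adjMat, Matrix.mulVec, dotProduct, ite_mul]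
  rw [expand]
  have split : ∀ j : Fin n, (if cyclePlusChords n k x y i j then f j else 0)
      = (if j = i + 1 then f j else 0) + (if (∃ m, i = x m ∧ j = y m) then f j else 0) := by
    intro j
    by_cases h1 : j = i + 1
    · have h2 : ¬ (∃ m, i = x m ∧ j = y m) := hdisj j h1
      have hc : cyclePlusChords n k x y i j := (aux_arc_iff hn i j).2 (Or.inl h1)
      subst h1
      simp [hc, h2]
    · by_cases h2 : ∃ m, i = x m ∧ j = y m
      · have hc : cyclePlusChords n k x y i j := (aux_arc_iff hn i j).2 (Or.inr h2)
        simp [hc, h1, h2]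
      · have hc : ¬ cyclePlusChords n k x y i j := by
          intro hc
          rcases (aux_arc_iff hn i j).1 hc with a | b
          · exact h1 a
          · exact h2 b
        simp [hc, h1, h2]
  rw [Finset.sum_congr rfl (fun j _ => split j), Finset.sum_add_distrib]
  congr 1
  · rw [Finset.sum_ite_eq' Finset.univ (i + 1) f]
    simp
  · by_cases hex : ∃ m, x m = i
    · obtain ⟨m0, hm0⟩ := hex
      have huniq : ∀ l : Fin k, x l = i → l = m0 := by
        intro l hl
        apply aux_chord_unique hyx hinter (l := l) (m := m0)
        · have : (x l).val = (x m0).val := by rw [hl, hm0]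
          rw [this]; exact (hyx m0).le
        · have : (x l).val = (x m0).val := by rw [hl, hm0]
          omega
      have hfilter : Finset.univ.filter (fun m => x m = i) = {m0} := by
        ext l
        simp only [Finset.mem_filter, Finset.mem_univ, true_and, Finset.mem_singleton]
        exact ⟨fun hl => huniq l hl, fun hl => hl ▸ hm0⟩
      have hP : ∀ j : Fin n, (∃ m, i = x m ∧ j = y m) ↔ j = y m0 := by
        intro j
        constructor
        · rintro ⟨m, hm1, hm2⟩
          rw [hm2, huniq m hm1.symm]
        · rintro rfl
          exact ⟨m0, hm0.symm, rfl⟩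
      rw [hfilter, Finset.sum_singleton]
      calc (∑ j, if (∃ m, i = x m ∧ j = y m) then f j else 0)
          = ∑ j, if j = y m0 then f j else 0 :=
            Finset.sum_congr rfl (fun j _ => by rw [if_congr (hP j) rfl rfl])
        _ = f (y m0) := by rw [Finset.sum_ite_eq' Finset.univ (y m0) f]; simp
    · have hforall : ∀ j : Fin n, ¬ (∃ m, i = x m ∧ j = y m) := by
        rintro j ⟨m, hm, -⟩
        exact hex ⟨m, hm.symm⟩
      have hfilter : Finset.univ.filter (fun m => x m = i) = ∅ := by
        ext l
        simp only [Finset.mem_filter, Finset.mem_univ, true_and, Finset.notMem_empty,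
          iff_false]
        intro hl
        exact hex ⟨l, hl⟩
      simp [hforall, hfilter]

end RowV

/-- Interval length of the `m`-th chord. -/
def auxL {n k : ℕ} (x y : Fin k → Fin n) (m : Fin k) : ℕ := (x m).val + 1 - (y m).val

/-- Chords whose head lies strictly below `u`. -/
def auxF {n k : ℕ} (x : Fin k → Fin n) (u : ℕ) : Finset (Fin k) :=
  Finset.univ.filter (fun m => (x m).val < u)

/-- The (normalized) Perron vector candidate, as a function of the eigenvalue `c`. -/
def auxV {n k : ℕ} (x y : Fin k → Fin n) (c : ℝ) (u : ℕ) : ℝ :=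
  c ^ u * ∏ m ∈ auxF x u, (1 - (c ^ auxL x y m)⁻¹)

section VFacts

variable {n k : ℕ} {x y : Fin k → Fin n}

lemma aux_v_zero (c : ℝ) : auxV x y c 0 = 1 := by
  have h : auxF x 0 = ∅ := by
    ext l; simp [auxF]
  simp [auxV, h]

lemma aux_v_pos (hyx : ∀ i, (y i).val < (x i).val) {c : ℝ} (hc : 1 < c) (u : ℕ) :
    0 < auxV x y c u := by
  apply mul_pos (pow_pos (by linarith) u)
  apply Finset.prod_pos
  intro m _
  have hL : auxL x y m ≠ 0 := by
    have := hyx m; unfold auxL; omega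
  have h1 : 1 < c ^ auxL x y m := one_lt_pow₀ hc hL
  have h2 : (c ^ auxL x y m)⁻¹ < 1 := by
    rw [inv_lt_one_iff₀]
    right; exact h1
  linarith

lemma aux_v_rec (hyx : ∀ i, (y i).val < (x i).val)
    (hinter : ∀ i j : Fin k, (i : ℕ) < (j : ℕ) → (x i).val < (y j).val)
    {c : ℝ} (hc : 0 < c) (u : ℕ) :
    auxV x y c (u + 1) = c * auxV x y c u
      - ∑ m ∈ Finset.univ.filter (fun m => (x m).val = u), auxV x y c ((y m).val) := by
  by_cases hex : ∃ m, (x m).val = u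
  · obtain ⟨m0, hm0⟩ := hex
    have huniq : ∀ l : Fin k, (x l).val = u → l = m0 := by
      intro l hl
      apply aux_chord_unique hyx hinter (l := l) (m := m0)
      · rw [hl, ← hm0]; exact (hyx m0).le
      · omega
    have hfilter : Finset.univ.filter (fun m => (x m).val = u) = {m0} := by
      ext l
      simp only [Finset.mem_filter, Finset.mem_univ, true_and, Finset.mem_singleton]
      exact ⟨fun hl => huniq l hl, fun hl => hl ▸ hm0⟩
    have hF1 : auxF x (u + 1) = insert m0 (auxF x u) := by
      ext l
      simp only [auxF, Finset.mem_filter, Finset.mem_univ, true_and, Finset.mem_insert]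
      constructor
      · intro hl
        rcases Nat.lt_or_ge (x l).val u with h | h
        · exact Or.inr h
        · exact Or.inl (huniq l (by omega))
      · rintro (rfl | hl)
        · omega
        · omega
    have hm0F : m0 ∉ auxF x u := by simp [auxF, hm0]
    have hFy : auxF x ((y m0).val) = auxF x u := by
      ext l
      simp only [auxF, Finset.mem_filter, Finset.mem_univ, true_and]
      constructor
      · intro h
        have := hyx m0; omega
      · intro h
        have hlm : l ≠ m0 := by
          intro he; rw [he] at h; omega
        rcases lt_trichotomy (l : ℕ) (m0 : ℕ) with ht | ht | ht
        · exact hinter l m0 ht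
        · exact absurd (Fin.ext ht) hlm
        · have := hinter m0 l ht
          have := hyx l
          omega
    rw [hfilter, Finset.sum_singleton]
    unfold auxV
    rw [hF1, Finset.prod_insert hm0F, hFy]
    have hLy : (y m0).val + auxL x y m0 = u + 1 := by
      unfold auxL; have := hyx m0; omega
    have hpow : c ^ (u + 1) * (c ^ auxL x y m0)⁻¹ = c ^ (y m0).val := by
      rw [← hLy, pow_add]
      field_simp
    have expand : c ^ (u + 1) * ((1 - (c ^ auxL x y m0)⁻¹) * ∏ m ∈ auxF x u, (1 - (c ^ auxL x y m)⁻¹))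
        = c * (c ^ u * ∏ m ∈ auxF x u, (1 - (c ^ auxL x y m)⁻¹))
          - (c ^ (u + 1) * (c ^ auxL x y m0)⁻¹) * ∏ m ∈ auxF x u, (1 - (c ^ auxL x y m)⁻¹) := by
      ring
    rw [expand, hpow]
  · have hfilter : Finset.univ.filter (fun m => (x m).val = u) = ∅ := by
      ext l
      simp only [Finset.mem_filter, Finset.mem_univ, true_and, Finset.notMem_empty, iff_false]
      intro hl
      exact hex ⟨l, hl⟩
    have hF : auxF x (u + 1) = auxF x u := by
      ext l
      simp only [auxF, Finset.mem_filter, Finset.mem_univ, true_and]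
      have : (x l).val ≠ u := fun h => hex ⟨l, h⟩
      omega
    rw [hfilter, Finset.sum_empty]
    unfold auxV
    rw [hF]
    ring

end VFacts
section Root

variable {n k : ℕ} {x y : Fin k → Fin n}

lemma aux_root (hk : 1 ≤ k) (hn : 3 ≤ n)
    (hyx : ∀ i, (y i).val < (x i).val)
    (hinter : ∀ i j : Fin k, (i : ℕ) < (j : ℕ) → (x i).val < (y j).val) :
    ∃ c : ℝ, 1 < c ∧ auxV x y c n = 1 := by
  set g : ℝ → ℝ := fun c => (∏ m : Fin k, (c ^ auxL x y m - 1)) * c ^ n - c ^ (∑ m : Fin k, auxL x y m)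
    with hg
  have hcont : Continuous g := by
    apply Continuous.sub
    · exact (continuous_finset_prod _ (fun m _ => (continuous_pow _).sub continuous_const)).mul
        (continuous_pow n)
    · exact continuous_pow _
  have hg1 : g 1 = -1 := by
    have hz : (∏ m : Fin k, ((1 : ℝ) ^ auxL x y m - 1)) = 0 :=
      Finset.prod_eq_zero (Finset.mem_univ (⟨0, hk⟩ : Fin k)) (by rw [one_pow, sub_self])
    simp only [hg]
    rw [hz]
    norm_num
  have hL1 : ∀ m : Fin k, 1 ≤ auxL x y m := by
    intro m; have := hyx m; unfold auxL; omega
  have hfac : ∀ m : Fin k, (2 : ℝ) ^ (auxL x y m - 1) ≤ 2 ^ auxL x y m - 1 := by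
    intro m
    have he : auxL x y m = (auxL x y m - 1) + 1 := by have := hL1 m; omega
    have h2 : (2 : ℝ) ^ auxL x y m = 2 * 2 ^ (auxL x y m - 1) := by
      conv_lhs => rw [he]
      rw [pow_succ]; ring
    have h3 : (1 : ℝ) ≤ 2 ^ (auxL x y m - 1) := one_le_pow₀ (by norm_num)
    linarith
  have hprod : (2 : ℝ) ^ (∑ m : Fin k, (auxL x y m - 1)) ≤ ∏ m : Fin k, ((2:ℝ) ^ auxL x y m - 1) := by
    rw [← Finset.prod_pow_eq_pow_sum]
    exact Finset.prod_le_prod (fun m _ => by positivity) (fun m _ => hfac m)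
  have hkn : k ≤ n := by
    have hinj : Function.Injective x := aux_x_inj hyx hinter
    have := Fintype.card_le_of_injective x hinj
    simpa using this
  have hsum : (∑ m : Fin k, (auxL x y m - 1)) + k = ∑ m : Fin k, auxL x y m := by
    have : ∀ m : Fin k, auxL x y m = (auxL x y m - 1) + 1 := fun m => by have := hL1 m; omega
    calc (∑ m : Fin k, (auxL x y m - 1)) + k
        = (∑ m : Fin k, (auxL x y m - 1)) + ∑ _m : Fin k, 1 := by
          simp [Finset.card_univ]
      _ = ∑ m : Fin k, ((auxL x y m - 1) + 1) := (Finset.sum_add_distrib).symm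
      _ = ∑ m : Fin k, auxL x y m := Finset.sum_congr rfl (fun m _ => (this m).symm)
  have hg2 : 0 ≤ g 2 := by
    have h1 : (2:ℝ) ^ (∑ m : Fin k, (auxL x y m - 1)) * 2 ^ n
        = 2 ^ ((∑ m : Fin k, (auxL x y m - 1)) + n) := by rw [pow_add]
    have h2 : (2:ℝ) ^ (∑ m : Fin k, auxL x y m) ≤ 2 ^ ((∑ m : Fin k, (auxL x y m - 1)) + n) := by
      apply pow_le_pow_right₀ (by norm_num)
      omega
    have h3 : (0:ℝ) < 2 ^ n := by positivity
    have h4 : (∏ m : Fin k, ((2:ℝ) ^ auxL x y m - 1)) * 2 ^ n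
        ≥ 2 ^ (∑ m : Fin k, (auxL x y m - 1)) * 2 ^ n :=
      mul_le_mul_of_nonneg_right hprod h3.le
    simp only [hg]
    rw [h1] at h4
    linarith
  have hivt := intermediate_value_Icc (by norm_num : (1:ℝ) ≤ 2) hcont.continuousOn
  have h0mem : (0 : ℝ) ∈ Set.Icc (g 1) (g 2) := ⟨by rw [hg1]; norm_num, hg2⟩
  obtain ⟨c, hcmem, hceq⟩ := hivt h0mem
  have hc1 : 1 < c := by
    rcases lt_or_eq_of_le hcmem.1 with h | h
    · exact h
    · exfalso
      rw [← h, hg1] at hceq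
      norm_num at hceq
  refine ⟨c, hc1, ?_⟩
  have hc0 : (0 : ℝ) < c := by linarith
  have hFn : auxF x n = Finset.univ := by
    ext l; simp [auxF, (x l).isLt]
  have hkey : (∏ m : Fin k, (1 - (c ^ auxL x y m)⁻¹))
      = (∏ m : Fin k, (c ^ auxL x y m - 1)) * (c ^ (∑ m : Fin k, auxL x y m))⁻¹ := by
    rw [← Finset.prod_pow_eq_pow_sum, ← Finset.prod_inv_distrib, ← Finset.prod_mul_distrib]
    apply Finset.prod_congr rfl
    intro m _
    have : (c : ℝ) ^ auxL x y m ≠ 0 := pow_ne_zero _ hc0.ne'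
    field_simp
  have hgc : (∏ m : Fin k, (c ^ auxL x y m - 1)) * c ^ n = c ^ (∑ m : Fin k, auxL x y m) := by
    have := hceq
    simp only [hg] at this
    linarith
  unfold auxV
  rw [hFn, hkey]
  have hS : (c : ℝ) ^ (∑ m : Fin k, auxL x y m) ≠ 0 := pow_ne_zero _ hc0.ne'
  field_simp
  linarith [hgc]

lemma aux_perron [NeZero n] (hk : 1 ≤ k) (hn : 3 ≤ n) (hy : ∀ i, 0 < (y i).val)
    (hyx : ∀ i, (y i).val < (x i).val)
    (hinter : ∀ i j : Fin k, (i : ℕ) < (j : ℕ) → (x i).val < (y j).val) :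
    ∃ c : ℝ, 1 < c ∧ ∃ v : Fin n → ℝ, (∀ i, 0 < v i) ∧
      (adjMat (cyclePlusChords n k x y)).mulVec v = c • v := by
  obtain ⟨c, hc1, hroot⟩ := aux_root hk hn hyx hinter
  have hc0 : (0 : ℝ) < c := by linarith
  refine ⟨c, hc1, fun i => auxV x y c i.val, fun i => aux_v_pos hyx hc1 _, ?_⟩
  funext i
  rw [aux_row hn hy hyx hinter]
  have hfiltereq : ∀ u : ℕ, i.val = u →
      (∑ m ∈ Finset.univ.filter (fun m => x m = i), auxV x y c (y m).val)
        = ∑ m ∈ Finset.univ.filter (fun m => (x m).val = u), auxV x y c (y m).val := by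
    rintro u rfl
    apply Finset.sum_congr _ (fun _ _ => rfl)
    ext l
    simp [Fin.ext_iff]
  rcases Nat.lt_or_ge i.val (n - 1) with hlt | hge
  · have h1 : (i + 1).val = i.val + 1 := aux_val_add_one_of_lt (by omega) hlt
    have hrec := aux_v_rec (x := x) (y := y) hyx hinter hc0 i.val
    rw [h1, hfiltereq i.val rfl]
    simp only [Pi.smul_apply, smul_eq_mul]
    linarith [hrec]
  · have heq : i.val = n - 1 := by have := i.isLt; omega
    have h1 : (i + 1).val = 0 := aux_val_add_one_last (by omega) heq
    have hrec := aux_v_rec (x := x) (y := y) hyx hinter hc0 (n - 1)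
    have hn' : n - 1 + 1 = n := by omega
    rw [hn'] at hrec
    rw [h1, hfiltereq (n - 1) heq, aux_v_zero]
    simp only [Pi.smul_apply, smul_eq_mul, heq]
    rw [hroot] at hrec
    linarith [hrec]

end Root
section Spec

variable {n k : ℕ} {x y : Fin k → Fin n}

lemma aux_adj_nonneg {V : Type*} (E : V → V → Prop) : ∀ i j, 0 ≤ adjMat E i j := by
  intro i j
  unfold adjMat
  simp only [Matrix.of_apply]
  split <;> norm_num

lemma aux_mulVec_nonneg {N : Type*} [Fintype N] (A : Matrix N N ℝ) (hA : ∀ i j, 0 ≤ A i j)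
    (f : N → ℝ) (hf : ∀ i, 0 ≤ f i) (i : N) : 0 ≤ A.mulVec f i := by
  apply Finset.sum_nonneg
  intro j _
  exact mul_nonneg (hA i j) (hf j)

lemma aux_zero_mem [NeZero n] (hn : 3 ≤ n) (hy : ∀ i, 0 < (y i).val)
    (hyx : ∀ i, (y i).val < (x i).val)
    (hinter : ∀ i j : Fin k, (i : ℕ) < (j : ℕ) → (x i).val < (y j).val) :
    (0 : ℝ) ∈ compSpec (adjMat (cyclePlusChords n k x y)) := by
  set A := adjMat (cyclePlusChords n k x y) with hA
  set e0 : Fin n → ℝ := fun i => if i = 0 then 1 else 0 with he0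
  have he0nn : ∀ i, 0 ≤ e0 i := by
    intro i; simp only [he0]; split <;> norm_num
  have hAe0 : ∀ i, 0 ≤ A.mulVec e0 i := aux_mulVec_nonneg A (aux_adj_nonneg _) e0 he0nn
  refine ⟨e0, ?_, ?_, ?_, ?_⟩
  · intro h
    have := congrFun h 0
    simp [he0] at this
  · intro i
    exact he0nn i
  · intro i
    simp only [Pi.sub_apply, Pi.smul_apply, Pi.zero_apply, zero_smul, sub_zero]
    exact hAe0 i
  · have hrow := aux_row hn hy hyx hinter e0 (0 : Fin n)
    have h1 : e0 ((0 : Fin n) + 1) = 0 := by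
      have hv : ((0 : Fin n) + 1).val = 1 := by
        have : ((0 : Fin n)).val < n - 1 := by simp [Fin.val_zero]; omega
        rw [aux_val_add_one_of_lt (by omega) this, Fin.val_zero]
      simp only [he0]
      rw [if_neg]
      intro h
      rw [h] at hv
      simp at hv
    have h2 : Finset.univ.filter (fun m => x m = (0 : Fin n)) = ∅ := by
      ext l
      simp only [Finset.mem_filter, Finset.mem_univ, true_and, Finset.notMem_empty, iff_false]
      intro h
      have := hyx l
      have := hy l
      have : (x l).val = 0 := by rw [h]; simp
      omega
    have hA0 : A.mulVec e0 0 = 0 := by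
      rw [hrow, h1, h2, Finset.sum_empty, add_zero]
    simp only [dotProduct, Pi.sub_apply, Pi.smul_apply, zero_smul, Pi.zero_apply, sub_zero]
    apply Finset.sum_eq_zero
    intro i _
    by_cases h : i = (0 : Fin n)
    · rw [h, hA0]; ring
    · simp only [he0, if_neg h]; ring

lemma aux_one_mem [NeZero n] (hk : 1 ≤ k) (hn : 3 ≤ n) (hy : ∀ i, 0 < (y i).val)
    (hyx : ∀ i, (y i).val < (x i).val)
    (hinter : ∀ i j : Fin k, (i : ℕ) < (j : ℕ) → (x i).val < (y j).val) :
    (1 : ℝ) ∈ compSpec (adjMat (cyclePlusChords n k x y)) := by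
  set A := adjMat (cyclePlusChords n k x y) with hA
  set i₀ : Fin k := ⟨0, hk⟩ with hi₀
  set f : Fin n → ℝ := fun v => if (y i₀).val ≤ v.val ∧ v.val ≤ (x i₀).val then 1 else 0 with hf
  have hfnn : ∀ i, 0 ≤ f i := by
    intro i; simp only [hf]; split <;> norm_num
  have hfmem : ∀ i : Fin n, ((y i₀).val ≤ i.val ∧ i.val ≤ (x i₀).val) → f i = 1 := by
    intro i h; simp only [hf, if_pos h]
  have hfnot : ∀ i : Fin n, ¬((y i₀).val ≤ i.val ∧ i.val ≤ (x i₀).val) → f i = 0 := by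
    intro i h; simp only [hf, if_neg h]
  have hkey : ∀ i : Fin n, (y i₀).val ≤ i.val → i.val ≤ (x i₀).val → A.mulVec f i = 1 := by
    intro i hyi hix
    rw [aux_row hn hy hyx hinter f i]
    rcases lt_or_eq_of_le hix with hlt | heq
    · have h1 : (i + 1).val = i.val + 1 := by
        apply aux_val_add_one_of_lt (by omega)
        have := (x i₀).isLt; omega
      have h2 : f (i + 1) = 1 := hfmem _ (by rw [h1]; omega)
      have h3 : Finset.univ.filter (fun m => x m = i) = ∅ := by
        ext l
        simp only [Finset.mem_filter, Finset.mem_univ, true_and, Finset.notMem_empty, iff_false]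
        intro h
        have hl : l = i₀ := by
          apply aux_chord_unique hyx hinter
          · rw [h]; exact hyi
          · rw [h]; omega
        rw [hl] at h
        have : (x i₀).val = i.val := by rw [h]
        omega
      rw [h2, h3, Finset.sum_empty, add_zero]
    · have hieq : i = x i₀ := Fin.ext heq
      have h2 : f (i + 1) = 0 := by
        apply hfnot
        rcases Nat.lt_or_ge i.val (n - 1) with h | h
        · rw [aux_val_add_one_of_lt (by omega) h]
          omega
        · have hl : i.val = n - 1 := by have := i.isLt; omega
          rw [aux_val_add_one_last (by omega) hl]
          have := hy i₀
          omega
      have h3 : Finset.univ.filter (fun m => x m = i) = {i₀} := by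
        ext l
        simp only [Finset.mem_filter, Finset.mem_univ, true_and, Finset.mem_singleton]
        constructor
        · intro h
          apply aux_chord_unique hyx hinter
          · rw [h]; exact hyi
          · rw [h]; exact hix
        · rintro rfl
          exact hieq.symm
      rw [h2, h3, Finset.sum_singleton, hfmem (y i₀) ⟨le_refl _, (hyx i₀).le⟩]
      ring
  refine ⟨f, ?_, ?_, ?_, ?_⟩
  · intro h
    have := congrFun h (y i₀)
    rw [hfmem (y i₀) ⟨le_refl _, (hyx i₀).le⟩] at this
    simp at this
  · intro i
    exact hfnn i
  · intro i
    simp only [Pi.sub_apply, Pi.smul_apply, smul_eq_mul, one_mul, Pi.zero_apply]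
    by_cases h : (y i₀).val ≤ i.val ∧ i.val ≤ (x i₀).val
    · rw [hkey i h.1 h.2, hfmem i h]
      norm_num
    · rw [hfnot i h]
      have := aux_mulVec_nonneg A (aux_adj_nonneg _) f hfnn i
      linarith
  · simp only [dotProduct, Pi.sub_apply, Pi.smul_apply, smul_eq_mul, one_mul]
    apply Finset.sum_eq_zero
    intro i _
    by_cases h : (y i₀).val ≤ i.val ∧ i.val ≤ (x i₀).val
    · rw [hkey i h.1 h.2, hfmem i h]
      ring
    · rw [hfnot i h]
      ring

/-- The hard inclusion: every complementarity eigenvalue is 0, 1 or the spectral radius. -/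
lemma aux_incl [NeZero n] (hk : 1 ≤ k) (hn : 3 ≤ n) (hy : ∀ i, 0 < (y i).val)
    (hyx : ∀ i, (y i).val < (x i).val)
    (hinter : ∀ i j : Fin k, (i : ℕ) < (j : ℕ) → (x i).val < (y j).val)
    (lam : ℝ) (hmem : lam ∈ compSpec (adjMat (cyclePlusChords n k x y))) :
    lam = 0 ∨ lam = 1 ∨ matSpecRad (adjMat (cyclePlusChords n k x y)) = lam := by
  haveI : Nonempty (Fin n) := ⟨0⟩
  set A := adjMat (cyclePlusChords n k x y) with hAdef
  obtain ⟨xv, hxne, hxnn, hge, hdot⟩ := hmem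
  have hxnn' : ∀ i, 0 ≤ xv i := fun i => hxnn i
  have hge' : ∀ i, 0 ≤ A.mulVec xv i - lam * xv i := by
    intro i
    have := hge i
    simpa using this
  have hterm : ∀ i : Fin n, xv i * (A.mulVec xv i - lam * xv i) = 0 := by
    have hsum : ∑ i : Fin n, xv i * (A.mulVec xv i - lam * xv i) = 0 := by
      rw [← hdot]
      simp [dotProduct]
    have := (Finset.sum_eq_zero_iff_of_nonneg
      (fun i _ => mul_nonneg (hxnn' i) (hge' i))).1 hsum
    intro i
    exact this i (Finset.mem_univ i)
  have hcomp : ∀ i : Fin n, xv i ≠ 0 → A.mulVec xv i = lam * xv i := by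
    intro i hi
    rcases mul_eq_zero.1 (hterm i) with h | h
    · exact absurd h hi
    · linarith [sub_eq_zero.1 h]
  have hpos : ∀ i : Fin n, xv i ≠ 0 → 0 < xv i :=
    fun i hi => lt_of_le_of_ne (hxnn' i) (Ne.symm hi)
  obtain ⟨iw, hiw⟩ : ∃ i, xv i ≠ 0 := Function.ne_iff.1 hxne
  have hlam0 : 0 ≤ lam := by
    by_contra h
    push_neg at h
    have h1 : A.mulVec xv iw = lam * xv iw := hcomp iw hiw
    have h2 : 0 ≤ A.mulVec xv iw := aux_mulVec_nonneg A (aux_adj_nonneg _) xv hxnn' iw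
    nlinarith [hpos iw hiw]
  rcases eq_or_lt_of_le hlam0 with heq0 | hlampos
  · exact Or.inl heq0.symm
  by_cases hTuniv : ∀ i, xv i ≠ 0
  · right; right
    have heig : A.mulVec xv = lam • xv := by
      funext i
      rw [hcomp i (hTuniv i)]
      simp
    exact aux_matSpecRad_eq_of_pos_eigen A (aux_adj_nonneg _) lam hlam0 xv
      (fun i => hpos i (hTuniv i)) heig
  · right; left
    push_neg at hTuniv
    obtain ⟨i0, hi0⟩ := hTuniv
    set T : Set (Fin n) := {i | xv i ≠ 0} with hT
    have hTne : T.Nonempty := ⟨iw, hiw⟩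
    have hTproper : T ≠ Set.univ := by
      intro h
      have : i0 ∈ T := h ▸ Set.mem_univ i0
      exact this hi0
    have hout : ∀ u ∈ T, ∃ w ∈ T, cyclePlusChords n k x y u w := by
      intro u hu
      have h1 : A.mulVec xv u ≠ 0 := by
        rw [hcomp u hu]
        exact mul_ne_zero hlampos.ne' hu
      have h2 : A.mulVec xv u = ∑ j, A u j * xv j := by
        simp [Matrix.mulVec, dotProduct]
      rw [h2] at h1
      obtain ⟨j, -, hj⟩ := Finset.exists_ne_zero_of_sum_ne_zero h1
      refine ⟨j, ?_, ?_⟩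
      · intro hxj
        rw [hxj, mul_zero] at hj
        exact hj rfl
      · by_contra hE
        have : A u j = 0 := by
          simp only [hAdef, adjMat, Matrix.of_apply, if_neg hE]
        rw [this, zero_mul] at hj
        exact hj rfl
    obtain ⟨m, hint, hsucc⟩ := aux_gap hn hy hyx hinter T hTne hTproper hout
    have hrowT : ∀ i : Fin n, xv i ≠ 0 → A.mulVec xv i = lam * xv i := hcomp
    have hchain : ∀ d : ℕ, ∀ v : Fin n, v.val = (y m).val + d → v.val ≤ (x m).val →
        xv v = lam ^ d * xv (y m) := by
      intro d
      induction d with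
      | zero =>
          intro v hv _
          have : v = y m := Fin.ext (by omega)
          rw [this]; simp
      | succ d ih =>
          intro v hv hvx
          have hplt : (y m).val + d < n := by have := v.isLt; omega
          set p : Fin n := ⟨(y m).val + d, hplt⟩ with hp
          have hpmem : p ∈ T := hint p (by simp [hp]) (by simp [hp]; omega)
          have hpval : xv p = lam ^ d * xv (y m) := ih p rfl (by simp [hp]; omega)
          have hrow := aux_row hn hy hyx hinter xv p
          have hfilt : Finset.univ.filter (fun l => x l = p) = ∅ := by
            ext l
            simp only [Finset.mem_filter, Finset.mem_univ, true_and, Finset.notMem_empty,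
              iff_false]
            intro h
            have hl : l = m := by
              apply aux_chord_unique hyx hinter
              · rw [h]; simp [hp]
              · rw [h]; simp [hp]; omega
            rw [hl] at h
            have : (x m).val = p.val := by rw [h]
            simp only [hp] at this
            omega
          have hpv : (p + 1).val = p.val + 1 := by
            apply aux_val_add_one_of_lt (by omega)
            have := (x m).isLt
            simp only [hp]
            omega
          have hpsucc : p + 1 = v := by
            apply Fin.ext
            rw [hpv]
            simp only [hp]
            omega
          have := hcomp p hpmem
          rw [hrow, hfilt, Finset.sum_empty, add_zero, hpsucc] at this
          rw [this, hpval, pow_succ]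
          ring
    have hxm : x m ∈ T := hint (x m) (hyx m).le le_rfl
    have hym : y m ∈ T := hint (y m) le_rfl (hyx m).le
    have hymp : 0 < xv (y m) := hpos _ hym
    have hxmv : xv (x m) = lam ^ ((x m).val - (y m).val) * xv (y m) := by
      apply hchain _ (x m) (by have := hyx m; omega) le_rfl
    have hrowx := aux_row hn hy hyx hinter xv (x m)
    have hfiltx : Finset.univ.filter (fun l => x l = x m) = {m} := by
      ext l
      simp only [Finset.mem_filter, Finset.mem_univ, true_and, Finset.mem_singleton]
      constructor
      · intro h
        apply aux_chord_unique hyx hinter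
        · rw [h]; exact (hyx m).le
        · rw [h]
      · rintro rfl; rfl
    have hsval : xv (x m + 1) = 0 := by
      by_contra h
      exact hsucc h
    have heq2 := hcomp (x m) hxm
    rw [hrowx, hfiltx, Finset.sum_singleton, hsval, zero_add] at heq2
    -- heq2 : xv (y m) = lam * xv (x m)
    have hfinal : xv (y m) = lam ^ ((x m).val - (y m).val + 1) * xv (y m) := by
      calc xv (y m) = lam * xv (x m) := heq2
        _ = lam * (lam ^ ((x m).val - (y m).val) * xv (y m)) := by rw [hxmv]
        _ = lam ^ ((x m).val - (y m).val + 1) * xv (y m) := by rw [pow_succ]; ring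
    have hpow1 : lam ^ ((x m).val - (y m).val + 1) = 1 := by
      have h1 : (lam ^ ((x m).val - (y m).val + 1) - 1) * xv (y m) = 0 := by
        nlinarith [hfinal]
      rcases mul_eq_zero.1 h1 with h | h
      · linarith [sub_eq_zero.1 h]
      · exact absurd h hymp.ne'
    by_contra hlam1
    rcases lt_or_gt_of_ne hlam1 with h | h
    · have : lam ^ ((x m).val - (y m).val + 1) < 1 :=
        pow_lt_one₀ hlam0 h (by omega)
      linarith
    · have : 1 < lam ^ ((x m).val - (y m).val + 1) :=
        one_lt_pow₀ h (by omega)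
      linarith

end Spec
section Classify

variable {n k : ℕ} {x y : Fin k → Fin n}

lemma aux_classify [NeZero n] (hn : 3 ≤ n) (hy : ∀ i, 0 < (y i).val)
    (hyx : ∀ i, (y i).val < (x i).val)
    (hinter : ∀ i j : Fin k, (i : ℕ) < (j : ℕ) → (x i).val < (y j).val)
    (S : Set (Fin n)) (hSne : S.Nonempty) (hSproper : S ≠ Set.univ) :
    StronglyConnected (induceRel (cyclePlusChords n k x y) S) ↔
      ((∃ v, S = {v}) ∨
        ∃ i, S = {v : Fin n | (y i).val ≤ v.val ∧ v.val ≤ (x i).val}) := by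
  constructor
  · intro hSC
    obtain ⟨a, ha⟩ := hSne
    by_cases hsing : ∀ b ∈ S, b = a
    · left
      refine ⟨a, ?_⟩
      ext b
      exact ⟨fun hb => hsing b hb, fun hb => hb ▸ ha⟩
    · push_neg at hsing
      obtain ⟨b, hb, hba⟩ := hsing
      have hout : ∀ u ∈ S, ∃ w ∈ S, cyclePlusChords n k x y u w := by
        intro u hu
        by_cases hua : u = a
        · -- target b
          have hreach := hSC ⟨u, hu⟩ ⟨b, hb⟩
          rcases Relation.ReflTransGen.cases_head hreach with he | ⟨cmid, hrel, -⟩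
          · exfalso
            have : u = b := congrArg Subtype.val he
            rw [hua] at this
            exact hba this.symm
          · exact ⟨cmid.1, cmid.2, hrel⟩
        · have hreach := hSC ⟨u, hu⟩ ⟨a, ha⟩
          rcases Relation.ReflTransGen.cases_head hreach with he | ⟨cmid, hrel, -⟩
          · exfalso
            exact hua (congrArg Subtype.val he)
          · exact ⟨cmid.1, cmid.2, hrel⟩
      obtain ⟨m, hint, hsucc⟩ := aux_gap hn hy hyx hinter S ⟨a, ha⟩ hSproper hout
      right
      refine ⟨m, ?_⟩
      apply Set.Subset.antisymm
      · intro b0 hb0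
        have hym : y m ∈ S := hint (y m) le_rfl (hyx m).le
        have hreach := hSC ⟨y m, hym⟩ ⟨b0, hb0⟩
        have hmotive : ∀ (q : S), Relation.ReflTransGen
            (induceRel (cyclePlusChords n k x y) S) ⟨y m, hym⟩ q →
            (y m).val ≤ q.1.val ∧ q.1.val ≤ (x m).val := by
          intro q hq
          induction hq with
          | refl => exact ⟨le_rfl, (hyx m).le⟩
          | tail hsteps hstep ih =>
              rename_i c d
              rcases (aux_arc_iff hn c.1 d.1).1 hstep with he | ⟨l, hcl, hdy⟩
              · rcases lt_or_eq_of_le ih.2 with hlt | heqv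
                · have h1 : (c.1 + 1).val = c.1.val + 1 := by
                    apply aux_val_add_one_of_lt (by omega)
                    have := (x m).isLt
                    omega
                  rw [he, h1]
                  omega
                · exfalso
                  have : c.1 = x m := Fin.ext heqv
                  rw [this] at he
                  apply hsucc
                  rw [← he]
                  exact d.2
              · have hlm : l = m := by
                  apply aux_chord_unique hyx hinter
                  · rw [← hcl]; exact ih.1
                  · rw [← hcl]; exact ih.2
                rw [hdy, hlm]
                exact ⟨le_rfl, (hyx m).le⟩
        exact hmotive ⟨b0, hb0⟩ hreach
      · intro v hv
        exact hint v hv.1 hv.2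
  · rintro (⟨v0, rfl⟩ | ⟨m, rfl⟩)
    · intro u w
      have hu : u.1 = v0 := u.2
      have hw : w.1 = v0 := w.2
      have : u = w := Subtype.ext (hu.trans hw.symm)
      rw [this]
      exact Relation.ReflTransGen.refl
    · set C : Set (Fin n) := {v : Fin n | (y m).val ≤ v.val ∧ v.val ≤ (x m).val} with hC
      have hxC : x m ∈ C := ⟨(hyx m).le, le_rfl⟩
      have hyC : y m ∈ C := ⟨le_rfl, (hyx m).le⟩
      have hup : ∀ d : ℕ, ∀ u w : C, w.1.val = u.1.val + d →
          Relation.ReflTransGen (induceRel (cyclePlusChords n k x y) C) u w := by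
        intro d
        induction d with
        | zero =>
            intro u w hw
            have : u = w := Subtype.ext (Fin.ext (by omega))
            rw [this]
        | succ d ih =>
            intro u w hw
            have hux : u.1.val < (x m).val := by
              have hw2 := w.2.2
              omega
            have h1 : (u.1 + 1).val = u.1.val + 1 := by
              apply aux_val_add_one_of_lt (by omega)
              have := (x m).isLt
              omega
            have hpC : u.1 + 1 ∈ C := by
              constructor
              · rw [h1]; have := u.2.1; omega
              · rw [h1]; omega
            have hstep : induceRel (cyclePlusChords n k x y) C u ⟨u.1 + 1, hpC⟩ := by
              show cyclePlusChords n k x y u.1 (u.1 + 1)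
              exact (aux_arc_iff hn u.1 (u.1 + 1)).2 (Or.inl rfl)
            exact Relation.ReflTransGen.head hstep
              (ih ⟨u.1 + 1, hpC⟩ w (by rw [h1]; omega))
      intro u w
      rcases le_or_gt u.1.val w.1.val with h | h
      · exact hup (w.1.val - u.1.val) u w (by omega)
      · have h1 : Relation.ReflTransGen (induceRel (cyclePlusChords n k x y) C) u ⟨x m, hxC⟩ :=
          hup ((x m).val - u.1.val) u ⟨x m, hxC⟩ (by have := u.2.2; simp; omega)
        have hstep : induceRel (cyclePlusChords n k x y) C ⟨x m, hxC⟩ ⟨y m, hyC⟩ := by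
          show cyclePlusChords n k x y (x m) (y m)
          exact Or.inr (Or.inr ⟨m, rfl, rfl⟩)
        have h2 : Relation.ReflTransGen (induceRel (cyclePlusChords n k x y) C) ⟨y m, hyC⟩ w :=
          hup (w.1.val - (y m).val) ⟨y m, hyC⟩ w (by have := w.2.1; simp; omega)
        exact h1.trans (Relation.ReflTransGen.head hstep h2)

end Classify
/-- for a directed cycle with `k ≥ 1` pairwise "interleaved" backward
chords `(x i, y i)` (with `0 < y i < x i` and `x i < y j` for `i < j`), the induced
strongly connected proper subdigraphs are exactly the single vertices and the `k`
directed cycles induced by the intervals `[y i, x i]`; consequently the digraph has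
exactly the three complementarity eigenvalues `{0, 1, ρ(D)}`. -/
theorem stmt19 (n k : ℕ) (hk : 1 ≤ k) (x y : Fin k → Fin n)
    (hy : ∀ i, 0 < (y i).val)
    (hyx : ∀ i, (y i).val < (x i).val)
    (hinter : ∀ i j : Fin k, (i : ℕ) < (j : ℕ) → (x i).val < (y j).val) :
    (∀ S : Set (Fin n), S.Nonempty → S ≠ Set.univ →
      (StronglyConnected (induceRel (cyclePlusChords n k x y) S) ↔
        ((∃ v, S = {v}) ∨
          ∃ i, S = {v : Fin n | (y i).val ≤ v.val ∧ v.val ≤ (x i).val}))) ∧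
    compSpec (adjMat (cyclePlusChords n k x y)) = {0, 1, rho (cyclePlusChords n k x y)} ∧
    1 < rho (cyclePlusChords n k x y) ∧
    (compSpec (adjMat (cyclePlusChords n k x y))).ncard = 3 := by
  have hn : 3 ≤ n := by
    have h1 := hy ⟨0, hk⟩
    have h2 := hyx ⟨0, hk⟩
    have h3 := (x (⟨0, hk⟩ : Fin k)).isLt
    omega
  haveI : NeZero n := ⟨by omega⟩
  haveI : Nonempty (Fin n) := ⟨0⟩
  obtain ⟨c, hc1, v, hvpos, heig⟩ := aux_perron hk hn hy hyx hinter
  have hrho : rho (cyclePlusChords n k x y) = c := by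
    show matSpecRad (adjMat (cyclePlusChords n k x y)) = c
    exact aux_matSpecRad_eq_of_pos_eigen _ (aux_adj_nonneg _) c (by linarith) v hvpos heig
  have hrho1 : 1 < rho (cyclePlusChords n k x y) := by rw [hrho]; exact hc1
  have hspec : compSpec (adjMat (cyclePlusChords n k x y))
      = {0, 1, rho (cyclePlusChords n k x y)} := by
    ext lam
    constructor
    · intro h
      rcases aux_incl hk hn hy hyx hinter lam h with h0 | h1 | hr
      · left; exact h0
      · right; left; exact h1
      · right; right
        rw [← hr]
        rfl
    · rintro (rfl | rfl | rfl)
      · exact aux_zero_mem hn hy hyx hinter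
      · exact aux_one_mem hk hn hy hyx hinter
      · have h0 : (adjMat (cyclePlusChords n k x y)).mulVec v
            - rho (cyclePlusChords n k x y) • v = 0 := by
          rw [heig, hrho, sub_self]
        exact ⟨v, fun hv0 => (hvpos 0).ne' (congrFun hv0 0), fun i => (hvpos i).le,
          by rw [h0], by rw [h0, dotProduct_zero]⟩
  refine ⟨fun S h1 h2 => aux_classify hn hy hyx hinter S h1 h2, hspec, hrho1, ?_⟩
  rw [hspec]
  apply Set.ncard_eq_three.2
  exact ⟨0, 1, rho (cyclePlusChords n k x y), by norm_num, by intro h; rw [← h] at hrho1; linarith,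
    by intro h; rw [← h] at hrho1; linarith, rfl⟩
end
end
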